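/- arXiv:2502.01917 — 10 statements merged into one kernel-verified Lean document; each statement's English description precedes it below -/
import Mathlib

section
/- Let a, b ∈ ℤ₊ⁿ with a ≥_σ b. The 2×n semi-standard tableau [a; b] is standard if and only if a = b, or there exists k ∈ [n] with a_i = b_i for all i < k, a_k < b_k, and a_j ≥ b_j for all k < j ≤ n. -/
open Finset

/-- `a >_σ b`: the first index where `a` and `b` differ has `a k < b k`. -/
def sigmaGT {n : ℕ} (a b : Fin n → ℕ+) : Prop :=
  ∃ k : Fin n, (∀ i : Fin n, i < k → a i = b i) ∧ a k < b k

/-- `a ≥_σ b`. -/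
def sigmaGE {n : ℕ} (a b : Fin n → ℕ+) : Prop :=
  a = b ∨ sigmaGT a b

/-- A `p × n` tableau (rows in `ℤ₊ⁿ`) is semi-standard if its rows weakly decrease under `σ`. -/
def SemiStandard {p n : ℕ} (A : Fin p → Fin n → ℕ+) : Prop :=
  ∀ i j : Fin p, i ≤ j → sigmaGE (A i) (A j)

/-- `suppEq A B`: every column of `A` equals the corresponding column of `B` as a multiset. -/
def suppEq {p n : ℕ} (A B : Fin p → Fin n → ℕ+) : Prop :=
  ∀ j : Fin n, Multiset.map (fun i => A i j) Finset.univ.val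
    = Multiset.map (fun i => B i j) Finset.univ.val

/-- Row-wise lexicographic comparison of tableaux under `σ`: `A >_σ B`. -/
def tabGT {p n : ℕ} (A B : Fin p → Fin n → ℕ+) : Prop :=
  ∃ k : Fin p, (∀ i : Fin p, i < k → A i = B i) ∧ sigmaGT (A k) (B k)

/-- A semi-standard tableau is standard if it is `σ`-minimal among all semi-standard
tableaux with the same column supports. -/
def IsStandard {p n : ℕ} (A : Fin p → Fin n → ℕ+) : Prop :=
  SemiStandard A ∧ ∀ B : Fin p → Fin n → ℕ+,
    SemiStandard B → suppEq B A → B ≠ A → tabGT B A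

/-- An `n`-dimensional Ferrers diagram: a nonempty finite down-closed subset of `ℤ₊ⁿ`. -/
def IsFerrers {n : ℕ} (D : Set (Fin n → ℕ+)) : Prop :=
  D.Nonempty ∧ D.Finite ∧ ∀ b ∈ D, ∀ a : Fin n → ℕ+, (∀ i, a i ≤ b i) → a ∈ D

/-- `D` is standardizable. -/
def Standardizable {n : ℕ} (D : Set (Fin n → ℕ+)) : Prop :=
  ∀ a ∈ D, ∀ b ∈ D, a ≠ b → ∀ k : Fin n,
    (∀ i : Fin n, i < k → a i = b i) → a k < b k →
    (fun i => if i ≤ k then a i else max (a i) (b i)) ∈ D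

/-- degree of the variable `x_{i,j}` in the monomial `∏_ℓ x_{a ℓ}`. -/
def degOf {w n : ℕ} (a : Fin w → Fin n → ℕ+) (i : Fin n) (j : ℕ) : ℕ :=
  (Finset.univ.filter fun ℓ => ((a ℓ i : ℕ) = j)).card

private lemma pair_eq_pair' {α} {x y u v : α} (h : ({x, y} : Multiset α) = {u, v}) :
    (x = u ∧ y = v) ∨ (x = v ∧ y = u) := by
  rcases Multiset.cons_eq_cons.1 h with ⟨h1, h2⟩ | ⟨hne, cs, h1, h2⟩
  · exact Or.inl ⟨h1, Multiset.singleton_inj.1 h2⟩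
  · obtain ⟨hy, hcs⟩ := (Multiset.singleton_eq_cons_iff _).1 h1
    subst hcs
    exact Or.inr ⟨(Multiset.singleton_inj.1 h2).symm, hy⟩

theorem stmt2 {n : ℕ} (a b : Fin n → ℕ+) (h : sigmaGE a b) :
    IsStandard ![a, b] ↔
      a = b ∨ ∃ k : Fin n, (∀ i : Fin n, i < k → a i = b i) ∧ a k < b k ∧
        ∀ j : Fin n, k < j → b j ≤ a j := by
  have hss : SemiStandard ![a, b] := by
    intro i j hij
    fin_cases i <;> fin_cases j
    · exact Or.inl rfl
    · exact h
    · exact absurd hij (by decide)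
    · exact Or.inl rfl
  constructor
  · rintro ⟨-, hmin⟩
    by_cases hab : a = b
    · exact Or.inl hab
    rcases h with h | ⟨k, hpre, hk⟩
    · exact Or.inl h
    refine Or.inr ⟨k, hpre, hk, fun j hj => ?_⟩
    by_contra hlt
    push_neg at hlt
    -- swap column j
    set f := Function.update a j (b j) with hf
    set g := Function.update b j (a j) with hg
    have hjk : k ≠ j := fun e => absurd (e ▸ hj) (lt_irrefl j)
    have hBss : SemiStandard ![f, g] := by
      intro i i' hii'
      fin_cases i <;> fin_cases i'
      · exact Or.inl rfl
      · refine Or.inr ⟨k, fun i hik => ?_, ?_⟩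
        · have hij : i ≠ j := fun e => absurd (e ▸ hik) (not_lt_of_ge (le_of_lt hj))
          show f i = g i
          simp only [hf, hg, Function.update_of_ne hij]
          exact hpre i hik
        · show f k < g k
          simp only [hf, hg, Function.update_of_ne hjk]
          exact hk
      · exact absurd hii' (by decide)
      · exact Or.inl rfl
    have hBsupp : suppEq ![f, g] ![a, b] := by
      intro j'
      show ({f j', g j'} : Multiset ℕ+) = {a j', b j'}
      by_cases hj' : j' = j
      · subst hj'
        simp only [hf, hg, Function.update_self]
        exact Multiset.cons_swap _ _ _
      · simp only [hf, hg, Function.update_of_ne hj']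
    have hfa : f j ≠ a j := by
      simp only [hf, Function.update_self]
      exact fun e => absurd (e ▸ hlt) (lt_irrefl _)
    have hBne : ![f, g] ≠ ![a, b] := by
      intro e
      exact hfa (congrFun (congrFun e 0) j)
    rcases hmin _ hBss hBsupp hBne with ⟨m, hmpre, l, hl, hllt⟩
    fin_cases m
    · -- sigmaGT f a
      have hllt' : f l < a l := hllt
      by_cases hlj : l = j
      · subst hlj
        simp only [hf, Function.update_self] at hllt'
        exact absurd hllt' (not_lt_of_ge (le_of_lt hlt))
      · simp only [hf, Function.update_of_ne hlj] at hllt'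
        exact absurd hllt' (lt_irrefl _)
    · have e : f = a := hmpre 0 (by decide)
      exact hfa (congrFun e j)
  · rintro (rfl | ⟨k, hpre, hk, hpost⟩)
    · refine ⟨hss, fun B hB hsupp hne => ?_⟩
      exfalso
      apply hne
      funext i j
      have hcol : ({B 0 j, B 1 j} : Multiset ℕ+) = {a j, a j} := hsupp j
      rcases pair_eq_pair' hcol with ⟨h0, h1⟩ | ⟨h0, h1⟩ <;>
        fin_cases i <;> simp_all
    · refine ⟨hss, fun B hB hsupp hne => ?_⟩
      have hcol : ∀ j : Fin n, (B 0 j = a j ∧ B 1 j = b j) ∨ (B 0 j = b j ∧ B 1 j = a j) :=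
        fun j => pair_eq_pair' (hsupp j)
      -- B 0 ≠ a
      have hB0 : B 0 ≠ a := by
        intro e
        apply hne
        funext i j
        fin_cases i
        · exact congrFun e j
        · rcases hcol j with ⟨h0, h1⟩ | ⟨h0, h1⟩
          · exact h1
          · show B 1 j = b j
            rw [h1, ← h0, e]
      have hS : (Finset.univ.filter (fun j => B 0 j ≠ a j)).Nonempty := by
        rcases Function.ne_iff.1 hB0 with ⟨j, hj⟩
        exact ⟨j, by simp [hj]⟩
      set j0 := (Finset.univ.filter (fun j => B 0 j ≠ a j)).min' hS with hj0
      have hj0mem : B 0 j0 ≠ a j0 := by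
        have := Finset.min'_mem _ hS
        simpa using this
      have hj0min : ∀ i : Fin n, i < j0 → B 0 i = a i := by
        intro i hi
        by_contra hcon
        exact absurd hi (not_lt_of_ge (Finset.min'_le _ _ (by simp [hcon])))
      have hB0j0 : B 0 j0 = b j0 := by
        rcases hcol j0 with ⟨h0, -⟩ | ⟨h0, -⟩
        · exact absurd h0 hj0mem
        · exact h0
      have hbne : b j0 ≠ a j0 := hB0j0 ▸ hj0mem
      rcases lt_trichotomy j0 k with hlt | heq | hgt
      · exact absurd (hpre j0 hlt).symm hbne
      · -- contradiction with semi-standardness of B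
        exfalso
        subst heq
        have hB1j0 : B 1 j0 = a j0 := by
          rcases hcol j0 with ⟨h0, -⟩ | ⟨-, h1⟩
          · exact absurd h0 hj0mem
          · exact h1
        have hpreB : ∀ i : Fin n, i < j0 → B 0 i = B 1 i := by
          intro i hi
          have h0 := hj0min i hi
          rcases hcol i with ⟨-, h1⟩ | ⟨-, h1⟩
          · rw [h0, h1, hpre i hi]
          · rw [h0, h1]
        rcases hB 0 1 (by decide) with he | ⟨m, hm, hmlt⟩
        · exact hbne (by rw [← hB0j0, he, hB1j0])
        · rcases lt_trichotomy m j0 with h1 | h1 | h1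
          · exact absurd (hpreB m h1) (ne_of_lt hmlt)
          · subst h1
            rw [hB0j0, hB1j0] at hmlt
            exact absurd hk (not_lt_of_ge (le_of_lt hmlt))
          · have := hm j0 h1
            rw [hB0j0, hB1j0] at this
            exact hbne this
      · -- j0 > k : B 0 j0 = b j0 < a j0 gives tabGT
        have hblt : b j0 < a j0 := lt_of_le_of_ne (hpost j0 hgt) hbne
        refine ⟨0, fun i hi => absurd hi (by simp), j0, fun i hi => hj0min i hi, ?_⟩
        show B 0 j0 < a j0
        rw [hB0j0]; exact hblt
end

section
/- Let [a; b] be a 2×n semi-standard tableau with a ≠ b, and set k' = min{j : a_j ≠ b_j} (so a_{k'} < b_{k'}). If there exists j > k' with a_j < b_j, then [a; b] is not standard: the tableau [p; q] obtained by setting p_ℓ = a_ℓ for ℓ ≠ j, p_j = b_j, and q_ℓ = b_ℓ for ℓ ≠ j, q_j = a_j satisfies a >_σ p ≥_σ q, supp([p;q]) = supp([a;b]), and [p;q] <_σ [a;b] while [p;q] is semi-standard. -/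
open Finset

lemma sigmaGT_asymm {n : ℕ} {a b : Fin n → ℕ+} (h1 : sigmaGT a b) (h2 : sigmaGT b a) : False := by
  obtain ⟨k1, h1e, h1l⟩ := h1
  obtain ⟨k2, h2e, h2l⟩ := h2
  rcases lt_trichotomy k1 k2 with h | h | h
  · exact absurd (h2e k1 h).symm (ne_of_lt h1l)
  · subst h; exact absurd h1l (not_lt.2 h2l.le)
  · exact absurd (h1e k2 h).symm (ne_of_lt h2l)

theorem stmt4 {n : ℕ} (a b : Fin n → ℕ+) (hss : SemiStandard ![a, b]) (hne : a ≠ b)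
    (k' : Fin n) (hk' : a k' ≠ b k') (hmin : ∀ i : Fin n, i < k' → a i = b i)
    (j : Fin n) (hj : k' < j) (hjlt : a j < b j) :
    sigmaGT a (Function.update a j (b j)) ∧
    sigmaGE (Function.update a j (b j)) (Function.update b j (a j)) ∧
    suppEq ![Function.update a j (b j), Function.update b j (a j)] ![a, b] ∧
    SemiStandard ![Function.update a j (b j), Function.update b j (a j)] ∧
    tabGT ![a, b] ![Function.update a j (b j), Function.update b j (a j)] ∧
    ¬ IsStandard ![a, b] := by
  have hpj : Function.update a j (b j) j = b j := Function.update_self _ _ _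
  have hqj : Function.update b j (a j) j = a j := Function.update_self _ _ _
  -- a >_σ b
  have hab : sigmaGT a b := by
    have h := hss 0 1 (by norm_num)
    simp only [Matrix.cons_val_zero, Matrix.cons_val_one, Matrix.head_cons] at h
    rcases h with h | h
    · exact absurd h hne
    · exact h
  -- a k' < b k'
  have hklt : a k' < b k' := by
    obtain ⟨k, hke, hkl⟩ := hab
    rcases lt_trichotomy k k' with h | h | h
    · exact absurd (hmin k h) (ne_of_lt hkl)
    · subst h; exact hkl
    · exact absurd (hke k' h) hk'
  -- part 1
  have h1 : sigmaGT a (Function.update a j (b j)) := by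
    refine ⟨j, fun i hi => ?_, ?_⟩
    · rw [Function.update_of_ne (ne_of_lt hi)]
    · rw [hpj]; exact hjlt
  -- p >_σ q
  have hpq : sigmaGT (Function.update a j (b j)) (Function.update b j (a j)) := by
    refine ⟨k', fun i hi => ?_, ?_⟩
    · rw [Function.update_of_ne (ne_of_lt (hi.trans hj)), Function.update_of_ne (ne_of_lt (hi.trans hj))]
      exact hmin i hi
    · rw [Function.update_of_ne (ne_of_lt hj), Function.update_of_ne (ne_of_lt hj)]
      exact hklt
  have h2 : sigmaGE (Function.update a j (b j)) (Function.update b j (a j)) := Or.inr hpq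
  -- supp
  have h3 : suppEq ![Function.update a j (b j), Function.update b j (a j)] ![a, b] := by
    intro i
    have huniv : (Finset.univ.val : Multiset (Fin 2)) = {0, 1} := rfl
    rw [huniv]
    by_cases hij : i = j
    · subst hij
      show ({![Function.update a i (b i), Function.update b i (a i)] 0 i,
        ![Function.update a i (b i), Function.update b i (a i)] 1 i} : Multiset ℕ+) = {a i, b i}
      simp only [Matrix.cons_val_zero, Matrix.cons_val_one, Matrix.head_cons, hpj, hqj]
      exact Multiset.cons_swap _ _ _
    · simp [Function.update_of_ne hij]
  -- semistandard
  have h4 : SemiStandard ![Function.update a j (b j), Function.update b j (a j)] := by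
    intro i0 j0 hle
    fin_cases i0 <;> fin_cases j0
    · exact Or.inl rfl
    · simpa using h2
    · exact absurd hle (by decide)
    · exact Or.inl rfl
  -- tabGT
  have hpne : Function.update a j (b j) ≠ a := by
    intro h
    have := congrFun h j
    rw [hpj] at this
    exact absurd this.symm (ne_of_lt hjlt)
  have h5 : tabGT ![a, b] ![Function.update a j (b j), Function.update b j (a j)] := by
    refine ⟨0, fun i hi => absurd (Fin.lt_iff_val_lt_val.mp hi) (by simp), ?_⟩
    simpa using h1
  refine ⟨h1, h2, h3, h4, h5, ?_⟩
  rintro ⟨-, hstd⟩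
  have hBne : ![Function.update a j (b j), Function.update b j (a j)] ≠ ![a, b] := by
    intro h
    exact hpne (congrFun h 0)
  have := hstd _ h4 h3 hBne
  obtain ⟨k, hke, hkl⟩ := this
  fin_cases k
  · exact sigmaGT_asymm h1 (by simpa using hkl)
  · have := hke 0 (by norm_num)
    simp only [Matrix.cons_val_zero] at this
    exact hpne this
end

section
/- A semi-standard p×n tableau A = [a¹,…,a^p] is standard if and only if the 2×n tableau [a^h; a^k] is standard for every 1 ≤ h < k ≤ p. -/
open Finset

namespace Stmt5

variable {n : ℕ}

lemma firstDiff (a b : Fin n → ℕ+) (h : a ≠ b) :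
    ∃ m : Fin n, (∀ e, e < m → a e = b e) ∧ a m ≠ b m := by
  have hne : (Finset.univ.filter fun e => a e ≠ b e).Nonempty := by
    rcases Function.ne_iff.mp h with ⟨e, he⟩
    exact ⟨e, by simp [he]⟩
  refine ⟨(Finset.univ.filter fun e => a e ≠ b e).min' hne, ?_, ?_⟩
  · intro e he
    by_contra hne'
    have hle : (Finset.univ.filter fun e => a e ≠ b e).min' hne ≤ e :=
      Finset.min'_le _ _ (by simp [hne'])
    exact absurd he (not_lt.mpr hle)
  · have := Finset.min'_mem _ hne
    simpa using this

lemma sigmaGT_asymm {a b : Fin n → ℕ+} (h1 : sigmaGT a b) (h2 : sigmaGT b a) : False := by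
  obtain ⟨k, hk, hk2⟩ := h1
  obtain ⟨m, hm, hm2⟩ := h2
  rcases lt_trichotomy k m with h | h | h
  · exact absurd (hm k h).symm (ne_of_lt hk2)
  · subst h; exact lt_asymm hk2 hm2
  · exact absurd (hk m h) (ne_of_gt hm2)

lemma sigmaGE_antisymm {a b : Fin n → ℕ+} (h1 : sigmaGE a b) (h2 : sigmaGE b a) : a = b := by
  rcases h1 with h1 | h1
  · exact h1
  rcases h2 with h2 | h2
  · exact h2.symm
  · exact (sigmaGT_asymm h1 h2).elim

/-- `pairStd a b`: whenever `c` is the first difference of `a,b` (with `a c < b c`),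
all other columns satisfy `b e ≤ a e`. -/
def pairStd (a b : Fin n → ℕ+) : Prop :=
  ∀ c : Fin n, (∀ e, e < c → a e = b e) → a c < b c → ∀ e, e ≠ c → b e ≤ a e

/-- the tail-swap of `a` by `b` from column `c'` on. -/
def cut (a b : Fin n → ℕ+) (c' : Fin n) : Fin n → ℕ+ := fun e => if e < c' then a e else b e

lemma cut_lt {a b : Fin n → ℕ+} {c' e : Fin n} (h : e < c') : cut a b c' e = a e := if_pos h
lemma cut_ge {a b : Fin n → ℕ+} {c' e : Fin n} (h : ¬ e < c') : cut a b c' e = b e := if_neg h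
lemma cut_self {a b : Fin n → ℕ+} {c' : Fin n} : cut a b c' c' = b c' := if_neg (lt_irrefl _)

variable {a b x : Fin n → ℕ+} {c c' : Fin n}

lemma G1 (hc' : a c' < b c') (hx : sigmaGE x a) : sigmaGE x (cut a b c') := by
  rcases hx with heq | ⟨m, hm, hm2⟩
  · refine Or.inr ⟨c', fun e he => ?_, ?_⟩
    · rw [cut_lt he, heq]
    · rw [cut_self, heq]; exact hc'
  rcases lt_trichotomy m c' with h | rfl | h
  · exact Or.inr ⟨m, fun e he => by rw [cut_lt (lt_trans he h)]; exact hm e he,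
      by rw [cut_lt h]; exact hm2⟩
  · exact Or.inr ⟨m, fun e he => by rw [cut_lt he]; exact hm e he,
      by rw [cut_self]; exact lt_trans hm2 hc'⟩
  · exact Or.inr ⟨c', fun e he => by rw [cut_lt he]; exact hm e (lt_trans he h),
      by rw [cut_self, hm c' h]; exact hc'⟩

lemma G2 (hc' : a c' < b c') (hx : sigmaGE b x) : sigmaGE (cut b a c') x := by
  rcases hx with heq | ⟨m, hm, hm2⟩
  · refine Or.inr ⟨c', fun e he => ?_, ?_⟩
    · rw [cut_lt he, heq]
    · rw [cut_self, ← heq]; exact hc'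
  rcases lt_trichotomy m c' with h | rfl | h
  · exact Or.inr ⟨m, fun e he => by rw [cut_lt (lt_trans he h)]; exact hm e he,
      by rw [cut_lt h]; exact hm2⟩
  · exact Or.inr ⟨m, fun e he => by rw [cut_lt he]; exact hm e he,
      by rw [cut_self]; exact lt_trans hc' hm2⟩
  · exact Or.inr ⟨c', fun e he => by rw [cut_lt he]; exact hm e (lt_trans he h),
      by rw [cut_self, ← hm c' h]; exact hc'⟩

lemma G3 (hpre : ∀ e, e < c → a e = b e) (hc : a c < b c) (hcc' : c < c') :
    sigmaGE (cut a b c') (cut b a c') := by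
  refine Or.inr ⟨c, fun e he => ?_, ?_⟩
  · rw [cut_lt (lt_trans he hcc'), cut_lt (lt_trans he hcc'), hpre e he]
  · rw [cut_lt hcc', cut_lt hcc']; exact hc

lemma G6 (hpre : ∀ e, e < c → a e = b e) (hc : a c < b c) (hcc' : c < c')
    (hax : sigmaGE a x) (hbx : sigmaGE b x) : sigmaGE (cut a b c') x := by
  have hxa : a ≠ x := by
    rintro rfl
    have h1 : sigmaGE a b := Or.inr ⟨c, hpre, hc⟩
    have h2 := sigmaGE_antisymm h1 hbx
    rw [h2] at hc; exact lt_irrefl _ hc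
  obtain ⟨m, hm, hm2⟩ := hax.resolve_left hxa
  have hmc' : m < c' := by
    by_contra hm'
    push_neg at hm'
    have hxc : x c = a c := (hm c (lt_of_lt_of_le hcc' hm')).symm
    rcases hbx with heq | ⟨m', hm', hm'2⟩
    · rw [heq, hxc] at hc; exact lt_irrefl _ hc
    rcases lt_trichotomy m' c with h | rfl | h
    · exact absurd ((hpre m' h).symm.trans
        (hm m' (lt_trans h (lt_of_lt_of_le hcc' (by assumption))))) (ne_of_lt hm'2)
    · rw [hxc] at hm'2; exact lt_asymm hc hm'2
    · exact absurd ((hm' c h).trans hxc) (ne_of_gt hc)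
  exact Or.inr ⟨m, fun e he => by rw [cut_lt (lt_trans he hmc')]; exact hm e he,
    by rw [cut_lt hmc']; exact hm2⟩

lemma G7 (hpre : ∀ e, e < c → a e = b e) (hc : a c < b c) (hcc' : c < c')
    (hxa : sigmaGE x a) (hxb : sigmaGE x b) : sigmaGE x (cut b a c') := by
  have hxb' : x ≠ b := by
    rintro rfl
    have h1 : sigmaGE a x := Or.inr ⟨c, hpre, hc⟩
    have h2 := sigmaGE_antisymm hxa h1
    rw [← h2] at hc; exact lt_irrefl _ hc
  obtain ⟨m, hm, hm2⟩ := hxb.resolve_left hxb'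
  have hmc' : m < c' := by
    by_contra hcon
    push_neg at hcon
    have hxc : x c = b c := hm c (lt_of_lt_of_le hcc' hcon)
    rcases hxa with heq | ⟨m', hm', hm'2⟩
    · rw [← heq, hxc] at hc; exact lt_irrefl _ hc
    rcases lt_trichotomy m' c with h | rfl | h
    · exact absurd ((hm m' (lt_trans h (lt_of_lt_of_le hcc' hcon))).trans
        (hpre m' h).symm) (ne_of_lt hm'2)
    · rw [hxc] at hm'2; exact lt_asymm hc hm'2
    · exact absurd ((hm' c h).symm.trans hxc) (ne_of_lt hc)
  exact Or.inr ⟨m, fun e he => by rw [cut_lt (lt_trans he hmc')]; exact (hm e he),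
    by rw [cut_lt hmc']; exact hm2⟩

lemma G4 (hpre : ∀ e, e < c → a e = b e) (hc : a c < b c) (hcc' : c < c')
    (hax : sigmaGE a x) (hxa : a ≠ x) (hps : pairStd x b) : sigmaGE (cut a b c') x := by
  obtain ⟨m, pre1, lt1⟩ := hax.resolve_left hxa
  by_cases hm : m < c'
  · exact Or.inr ⟨m, fun e he => by rw [cut_lt (lt_trans he hm)]; exact pre1 e he,
      by rw [cut_lt hm]; exact lt1⟩
  push_neg at hm
  have hxa' : ∀ e, e < c' → x e = a e := fun e he => (pre1 e (lt_of_lt_of_le he hm)).symm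
  have hxc : x c = a c := hxa' c hcc'
  have hle : ∀ e, e ≠ c → b e ≤ x e := by
    refine hps c (fun e he => ?_) ?_
    · rw [hxa' e (lt_trans he hcc')]; exact hpre e he
    · rw [hxc]; exact hc
  have h1 : b c' ≤ x c' := hle c' (ne_of_gt hcc')
  rcases lt_or_eq_of_le h1 with h1 | h1
  · exact Or.inr ⟨c', fun e he => by rw [cut_lt he]; exact (hxa' e he).symm,
      by rw [cut_self]; exact h1⟩
  by_cases h2 : cut a b c' = x
  · exact Or.inl h2
  obtain ⟨m3, pre3, ne3⟩ := firstDiff _ _ h2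
  have hm3 : c' < m3 := by
    rcases lt_trichotomy m3 c' with h | h | h
    · exact absurd ((cut_lt h).trans (hxa' m3 h).symm) ne3
    · subst h; exact absurd (cut_self.trans h1) ne3
    · exact h
  refine Or.inr ⟨m3, pre3, ?_⟩
  rw [cut_ge (not_lt.mpr hm3.le)]
  rw [cut_ge (not_lt.mpr hm3.le)] at ne3
  exact lt_of_le_of_ne (hle m3 (ne_of_gt (lt_trans hcc' hm3))) ne3

lemma G5 (hpre : ∀ e, e < c → a e = b e) (hc : a c < b c) (hcc' : c < c')
    (hxb : sigmaGE x b) (hxbne : x ≠ b) (hps : pairStd a x) : sigmaGE x (cut b a c') := by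
  obtain ⟨m, pre2, lt2⟩ := hxb.resolve_left hxbne
  by_cases hm : m < c'
  · exact Or.inr ⟨m, fun e he => by rw [cut_lt (lt_trans he hm)]; exact pre2 e he,
      by rw [cut_lt hm]; exact lt2⟩
  push_neg at hm
  have hxb' : ∀ e, e < c' → x e = b e := fun e he => pre2 e (lt_of_lt_of_le he hm)
  have hxc : x c = b c := hxb' c hcc'
  have hle : ∀ e, e ≠ c → x e ≤ a e := by
    refine hps c (fun e he => ?_) ?_
    · rw [hxb' e (lt_trans he hcc')]; exact hpre e he
    · rw [hxc]; exact hc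
  have h1 : x c' ≤ a c' := hle c' (ne_of_gt hcc')
  rcases lt_or_eq_of_le h1 with h1 | h1
  · exact Or.inr ⟨c', fun e he => by rw [cut_lt he]; exact hxb' e he,
      by rw [cut_self]; exact h1⟩
  by_cases h2 : x = cut b a c'
  · exact Or.inl h2
  obtain ⟨m3, pre3, ne3⟩ := firstDiff _ _ h2
  have hm3 : c' < m3 := by
    rcases lt_trichotomy m3 c' with h | h | h
    · exact absurd ((hxb' m3 h).trans (cut_lt h).symm) ne3
    · subst h; exact absurd (h1.trans cut_self.symm) ne3
    · exact h
  refine Or.inr ⟨m3, pre3, ?_⟩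
  rw [cut_ge (not_lt.mpr hm3.le)]
  rw [cut_ge (not_lt.mpr hm3.le)] at ne3
  exact lt_of_le_of_ne (hle m3 (ne_of_gt (lt_trans hcc' hm3))) ne3

lemma map_univ_val_perm {α : Type*} [Fintype α] [DecidableEq α] (σ : Equiv.Perm α) :
    Finset.univ.val.map ⇑σ = Finset.univ.val := by
  have h := Finset.map_univ_equiv σ
  calc Finset.univ.val.map ⇑σ = (Finset.univ.map σ.toEmbedding).val := rfl
  _ = Finset.univ.val := by rw [h]

lemma std_imp_pairStd {p n : ℕ} {A : Fin p → Fin n → ℕ+} (hA : SemiStandard A)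
    (hS : IsStandard A) : ∀ h k : Fin p, h < k → pairStd (A h) (A k) := by
  by_contra hcon
  push_neg at hcon
  obtain ⟨h0, k0, hlt0, hfail0⟩ := hcon
  classical
  have hex : ∃ d, ∃ h k : Fin p, h < k ∧ (k : ℕ) = h + d ∧ ¬ pairStd (A h) (A k) := by
    refine ⟨(k0 : ℕ) - h0, h0, k0, hlt0, ?_, hfail0⟩
    have : (h0 : ℕ) < k0 := hlt0
    omega
  obtain ⟨h, k, hlt, hspan, hfail⟩ := Nat.find_spec hex
  have hmin : ∀ h' k' : Fin p, h' < k' → (k' : ℕ) - (h' : ℕ) < Nat.find hex →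
      pairStd (A h') (A k') := by
    intro h' k' hlt' hd
    by_contra hf
    refine Nat.find_min hex hd ⟨h', k', hlt', ?_, hf⟩
    have : (h' : ℕ) < k' := hlt'
    omega
  rw [pairStd] at hfail
  push_neg at hfail
  obtain ⟨c, hpre, hc, c', hne, hlt'⟩ := hfail
  have hvk : (h : ℕ) < k := hlt
  have hcc' : c < c' := by
    rcases lt_trichotomy c' c with h1 | h1 | h1
    · exact absurd (hpre c' h1) (ne_of_lt hlt')
    · exact absurd h1 hne
    · exact h1
  have hia : ∀ i : Fin p, h < i → i < k → A i ≠ A h := by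
    intro i hi1 hi2 heq
    have hv1 : (h : ℕ) < i := hi1
    have hv2 : (i : ℕ) < k := hi2
    have hstd := hmin i k hi2 (by omega)
    rw [heq] at hstd
    exact absurd (hstd c hpre hc c' hne) (not_le.mpr hlt')
  have hib : ∀ i : Fin p, h < i → i < k → A i ≠ A k := by
    intro i hi1 hi2 heq
    have hv1 : (h : ℕ) < i := hi1
    have hv2 : (i : ℕ) < k := hi2
    have hstd := hmin h i hi1 (by omega)
    rw [heq] at hstd
    exact absurd (hstd c hpre hc c' hne) (not_le.mpr hlt')
  have hhk : h ≠ k := ne_of_lt hlt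
  set Bh : Fin n → ℕ+ := cut (A h) (A k) c' with hBhdef
  set Bk : Fin n → ℕ+ := cut (A k) (A h) c' with hBkdef
  set B : Fin p → Fin n → ℕ+ := fun i => if i = h then Bh else if i = k then Bk else A i
    with hBdef
  have hBh : B h = Bh := by simp [hBdef]
  have hBk : B k = Bk := by simp [hBdef, hhk.symm]
  have hBo : ∀ i : Fin p, i ≠ h → i ≠ k → B i = A i := by
    intro i hi1 hi2; simp [hBdef, hi1, hi2]
  have hsemi : SemiStandard B := by
    intro i j hij
    rcases eq_or_lt_of_le hij with rfl | hij
    · exact Or.inl rfl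
    by_cases hih : i = h
    · subst hih
      rcases lt_trichotomy j k with hj | rfl | hj
      · rw [hBh, hBo j hij.ne' hj.ne]
        exact G4 hpre hc hcc' (hA i j hij.le) (hia j hij hj).symm
          (hmin j k hj (by have v1 : (i:ℕ) < j := hij; have v2 : (j:ℕ) < k := hj; omega))
      · rw [hBh, hBk]
        exact G3 hpre hc hcc'
      · rw [hBh, hBo j (lt_trans hlt hj).ne' hj.ne']
        exact G6 hpre hc hcc' (hA i j hij.le) (hA k j hj.le)
    by_cases hik : i = k
    · subst hik
      rw [hBk, hBo j (lt_trans hlt hij).ne' hij.ne']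
      exact G2 hlt' (hA i j hij.le)
    by_cases hjh : j = h
    · subst hjh
      rw [hBo i hih hik, hBh]
      exact G1 hlt' (hA i j hij.le)
    by_cases hjk : j = k
    · subst hjk
      rcases lt_trichotomy i h with hi | rfl | hi
      · rw [hBo i hih hik, hBk]
        exact G7 hpre hc hcc' (hA i h hi.le) (hA i j hij.le)
      · exact absurd rfl hih
      · rw [hBo i hih hik, hBk]
        exact G5 hpre hc hcc' (hA i j hij.le) (hib i hi hij)
          (hmin h i hi (by have v1 : (h:ℕ) < i := hi; have v2 : (i:ℕ) < j := hij; omega))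
    · rw [hBo i hih hik, hBo j hjh hjk]
      exact hA i j hij.le
  have hsupp : suppEq B A := by
    intro e
    by_cases he : e < c'
    · refine Multiset.map_congr rfl ?_
      intro i _
      by_cases h1 : i = h
      · subst h1; rw [hBh, hBhdef, cut_lt he]
      by_cases h2 : i = k
      · subst h2; rw [hBk, hBkdef, cut_lt he]
      · rw [hBo i h1 h2]
    · have hsw : ∀ i : Fin p, B i e = A (Equiv.swap h k i) e := by
        intro i
        by_cases h1 : i = h
        · subst h1; rw [hBh, hBhdef, cut_ge he, Equiv.swap_apply_left]
        by_cases h2 : i = k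
        · subst h2; rw [hBk, hBkdef, cut_ge he, Equiv.swap_apply_right]
        · rw [hBo i h1 h2, Equiv.swap_apply_of_ne_of_ne h1 h2]
      calc Finset.univ.val.map (fun i => B i e)
          = Finset.univ.val.map ((fun i => A i e) ∘ (Equiv.swap h k)) :=
            Multiset.map_congr rfl (fun i _ => hsw i)
        _ = (Finset.univ.val.map ⇑(Equiv.swap h k)).map (fun i => A i e) :=
            (Multiset.map_map _ _ _).symm
        _ = Finset.univ.val.map (fun i => A i e) := by rw [map_univ_val_perm]
  have hBA : B ≠ A := by
    intro heq
    have h1 : B h c' = A h c' := by rw [heq]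
    rw [hBh, hBhdef, cut_ge (lt_irrefl c')] at h1
    exact absurd h1 (ne_of_gt hlt')
  obtain ⟨r, hrpre, m, hmpre, hmlt⟩ := hS.2 B hsemi hsupp hBA
  rcases lt_trichotomy r h with hr | rfl | hr
  · rw [hBo r hr.ne (lt_trans hr hlt).ne] at hmlt
    exact lt_irrefl _ hmlt
  · rw [hBh, hBhdef] at hmpre hmlt
    rcases lt_trichotomy m c' with h1 | rfl | h1
    · rw [cut_lt h1] at hmlt; exact lt_irrefl _ hmlt
    · rw [cut_self] at hmlt; exact lt_asymm hlt' hmlt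
    · have := hmpre c' h1
      rw [cut_self] at this
      exact absurd this (ne_of_gt hlt')
  · have h1 := congrFun (hrpre h hr) c'
    rw [hBh, hBhdef, cut_self] at h1
    exact absurd h1 (ne_of_gt hlt')

def pfSet {p n : ℕ} (A : Fin p → Fin n → ℕ+) (r : Fin p) (X : Fin p → Fin n → ℕ+)
    (c : ℕ) : Finset (Fin p) :=
  Finset.univ.filter (fun i => r ≤ i ∧ ∀ e : Fin n, (e : ℕ) < c → X i e = A r e)

lemma mem_pfSet {p n : ℕ} {A : Fin p → Fin n → ℕ+} {r : Fin p} {X : Fin p → Fin n → ℕ+}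
    {c : ℕ} {i : Fin p} :
    i ∈ pfSet A r X c ↔ r ≤ i ∧ ∀ e : Fin n, (e : ℕ) < c → X i e = A r e := by
  simp [pfSet]

lemma pairStd_imp_std {p n : ℕ} {A : Fin p → Fin n → ℕ+} (hA : SemiStandard A)
    (hC : ∀ h k : Fin p, h < k → pairStd (A h) (A k)) : IsStandard A := by
  refine ⟨hA, ?_⟩
  intro B hB hsupp hne
  classical
  have hrow : (Finset.univ.filter fun i => B i ≠ A i).Nonempty := by
    rcases Function.ne_iff.mp hne with ⟨i, hi⟩
    exact ⟨i, by simp [hi]⟩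
  set r := (Finset.univ.filter fun i => B i ≠ A i).min' hrow with hrdef
  have hrne : B r ≠ A r := by
    have := Finset.min'_mem _ hrow
    simpa [hrdef] using this
  have hrmin : ∀ i, i < r → B i = A i := by
    intro i hi
    by_contra hne'
    exact absurd hi (not_lt.mpr (Finset.min'_le _ _ (by simp [hne'])))
  have hcol : (Finset.univ.filter fun e => B r e ≠ A r e).Nonempty := by
    rcases Function.ne_iff.mp hrne with ⟨e, he⟩
    exact ⟨e, by simp [he]⟩
  set j := (Finset.univ.filter fun e => B r e ≠ A r e).min' hcol with hjdef
  have hjne : B r j ≠ A r j := by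
    have := Finset.min'_mem _ hcol
    simpa [hjdef] using this
  have hjpre : ∀ e, e < j → B r e = A r e := by
    intro e he
    by_contra hne'
    exact absurd he (not_lt.mpr (Finset.min'_le _ _ (by simp [hne'])))
  rcases lt_or_gt_of_ne hjne with hlt | hgt
  · exact ⟨r, hrmin, j, hjpre, hlt⟩
  exfalso
  -- F-lemmas
  have hFA : ∀ i : Fin p, r ≤ i → ∀ e : Fin n,
      (∀ e', e' < e → A i e' = A r e') → A r e ≤ A i e := by
    intro i hi e hpre
    rcases hA r i hi with heq | ⟨m, hm, hm2⟩
    · exact le_of_eq (congrFun heq e)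
    rcases lt_trichotomy m e with h1 | rfl | h1
    · exact absurd (hpre m h1).symm (ne_of_lt hm2)
    · exact le_of_lt hm2
    · exact le_of_eq (hm e h1)
  have hFA2 : ∀ i : Fin p, r ≤ i → ∀ e : Fin n,
      (∃ e', e' < e ∧ A i e' ≠ A r e') → A i e ≤ A r e := by
    rintro i hi e ⟨e1, he1, hne1⟩
    have hir : r < i := by
      rcases lt_or_eq_of_le hi with h | h
      · exact h
      · exact absurd rfl (h ▸ hne1)
    have hne' : A r ≠ A i := fun hq => hne1 (congrFun hq.symm e1)
    obtain ⟨m, hm, hm2⟩ := (hA r i hi).resolve_left hne'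
    have hme : m < e := by
      rcases lt_or_ge m e with h | h
      · exact h
      · exact absurd (hm e1 (lt_of_lt_of_le he1 h)).symm hne1
    exact hC r i hir m hm hm2 e (ne_of_gt hme)
  have hFB : ∀ i : Fin p, r ≤ i → ∀ e : Fin n, e < j →
      (∀ e', e' < e → B i e' = A r e') → A r e ≤ B i e := by
    intro i hi e hej hpre
    rcases hB r i hi with heq | ⟨m, hm, hm2⟩
    · exact le_of_eq ((hjpre e hej).symm.trans (congrFun heq e))
    rcases lt_trichotomy m e with h1 | rfl | h1
    · exact absurd ((hjpre m (lt_trans h1 hej)).trans (hpre m h1).symm) (ne_of_lt hm2)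
    · have := hm2
      rw [hjpre m hej] at this
      exact this.le
    · exact le_of_eq ((hjpre e hej).symm.trans (hm e h1))
  have hFB4 : ∀ i : Fin p, r ≤ i → (∀ e', e' < j → B i e' = A r e') → A r j < B i j := by
    intro i hi hpre
    rcases hB r i hi with heq | ⟨m, hm, hm2⟩
    · have := hgt
      rwa [congrFun heq j] at this
    rcases lt_trichotomy m j with h1 | rfl | h1
    · exact absurd ((hjpre m h1).trans (hpre m h1).symm) (ne_of_lt hm2)
    · calc A r j < B r j := hgt
        _ < B i j := hm2
    · rw [← hm j h1]
      exact hgt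
  -- column counting
  have hcount : ∀ e : Fin n,
      (Finset.univ.filter fun i => r ≤ i ∧ A r e < B i e).card
        = (Finset.univ.filter fun i => r ≤ i ∧ A r e < A i e).card := by
    intro e
    have hfull : (Finset.univ.filter fun i => A r e < B i e).card
        = (Finset.univ.filter fun i => A r e < A i e).card := by
      have h1 := congrArg (Multiset.countP fun v => A r e < v) (hsupp e)
      rw [Multiset.countP_map, Multiset.countP_map] at h1
      calc (Finset.univ.filter fun i => A r e < B i e).card
          = Multiset.card (Multiset.filter (fun i => A r e < B i e) Finset.univ.val) := rfl
        _ = Multiset.card (Multiset.filter (fun i => A r e < A i e) Finset.univ.val) := h1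
        _ = (Finset.univ.filter fun i => A r e < A i e).card := rfl
    have hsplit : ∀ X : Fin p → Fin n → ℕ+,
        (Finset.univ.filter fun i => A r e < X i e).card
          = (Finset.univ.filter fun i => r ≤ i ∧ A r e < X i e).card
            + (Finset.univ.filter fun i => ¬ r ≤ i ∧ A r e < X i e).card := by
      intro X
      rw [← Finset.card_union_of_disjoint]
      · congr 1
        rw [← Finset.filter_or]
        apply Finset.filter_congr
        intro i _
        constructor
        · intro hx
          by_cases hri : r ≤ i
          · exact Or.inl ⟨hri, hx⟩
          · exact Or.inr ⟨hri, hx⟩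
        · rintro (⟨-, hx⟩ | ⟨-, hx⟩) <;> exact hx
      · rw [Finset.disjoint_left]
        rintro i hi1 hi2
        rw [Finset.mem_filter] at hi1 hi2
        exact hi2.2.1 hi1.2.1
    have hlow : (Finset.univ.filter fun i => ¬ r ≤ i ∧ A r e < B i e)
        = (Finset.univ.filter fun i => ¬ r ≤ i ∧ A r e < A i e) := by
      apply Finset.filter_congr
      intro i _
      constructor
      · rintro ⟨h1, h2⟩
        refine ⟨h1, ?_⟩
        rwa [congrFun (hrmin i (not_le.mp h1)) e] at h2
      · rintro ⟨h1, h2⟩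
        refine ⟨h1, ?_⟩
        rwa [congrFun (hrmin i (not_le.mp h1)) e]
    have e1 := hsplit A
    have e2 := hsplit B
    rw [hlow] at e2
    omega
  -- main induction on columns
  have key : ∀ c : ℕ, c ≤ (j : ℕ) → (pfSet A r A c).card ≤ (pfSet A r B c).card := by
    intro c
    induction c with
    | zero =>
      intro _
      have he : pfSet A r A 0 = pfSet A r B 0 := by
        apply Finset.filter_congr
        intro i _
        simp
      rw [he]
    | succ c ih =>
      intro hc1
      have hcj : c < (j : ℕ) := hc1
      have hcn : c < n := lt_trans hcj j.isLt
      set ec : Fin n := ⟨c, hcn⟩ with hec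
      have hchar : ∀ (X : Fin p → Fin n → ℕ+) (i : Fin p),
          i ∈ pfSet A r X (c+1) ↔ i ∈ pfSet A r X c ∧ X i ec = A r ec := by
        intro X i
        rw [mem_pfSet, mem_pfSet]
        constructor
        · rintro ⟨h1, h2⟩
          exact ⟨⟨h1, fun e he => h2 e (lt_trans he (Nat.lt_succ_self c))⟩,
            h2 ec (Nat.lt_succ_self c)⟩
        · rintro ⟨⟨h1, h2⟩, h3⟩
          refine ⟨h1, fun e he => ?_⟩
          rcases Nat.lt_succ_iff_lt_or_eq.mp he with he | he
          · exact h2 e he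
          · have hee : e = ec := Fin.ext he
            rw [hee]; exact h3
      have hGA_sub : (Finset.univ.filter fun i => r ≤ i ∧ A r ec < A i ec)
          ⊆ pfSet A r A c := by
        intro i hi
        rw [Finset.mem_filter] at hi
        obtain ⟨-, hi1, hi2⟩ := hi
        rw [mem_pfSet]
        refine ⟨hi1, ?_⟩
        by_contra hconx
        push_neg at hconx
        obtain ⟨e, he, hnee⟩ := hconx
        exact absurd hi2 (not_lt.mpr (hFA2 i hi1 ec ⟨e, he, hnee⟩))
      have hdisj : Disjoint (pfSet A r A (c+1))
          (Finset.univ.filter fun i => r ≤ i ∧ A r ec < A i ec) := by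
        rw [Finset.disjoint_left]
        intro i h1 h2
        rw [Finset.mem_filter] at h2
        exact absurd ((hchar A i).mp h1).2 (ne_of_gt h2.2.2)
      have hA_card : (pfSet A r A (c+1)).card
          + (Finset.univ.filter fun i => r ≤ i ∧ A r ec < A i ec).card
          ≤ (pfSet A r A c).card := by
        rw [← Finset.card_union_of_disjoint hdisj]
        apply Finset.card_le_card
        intro i hi
        rcases Finset.mem_union.mp hi with hi | hi
        · exact ((hchar A i).mp hi).1
        · exact hGA_sub hi
      have hB_sub : pfSet A r B c ⊆ pfSet A r B (c+1)
          ∪ (Finset.univ.filter fun i => r ≤ i ∧ A r ec < B i ec) := by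
        intro i hi
        have hi' := mem_pfSet.mp hi
        have hge : A r ec ≤ B i ec := hFB i hi'.1 ec hcj (fun e' he' => hi'.2 e' he')
        rcases lt_or_eq_of_le hge with h1 | h1
        · exact Finset.mem_union_right _ (Finset.mem_filter.mpr ⟨Finset.mem_univ _, hi'.1, h1⟩)
        · exact Finset.mem_union_left _ ((hchar B i).mpr ⟨hi, h1.symm⟩)
      have hB_card : (pfSet A r B c).card ≤ (pfSet A r B (c+1)).card
          + (Finset.univ.filter fun i => r ≤ i ∧ A r ec < B i ec).card := by
        calc (pfSet A r B c).card
            ≤ (pfSet A r B (c+1)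
              ∪ (Finset.univ.filter fun i => r ≤ i ∧ A r ec < B i ec)).card :=
              Finset.card_le_card hB_sub
          _ ≤ _ := Finset.card_union_le _ _
      have hcnt := hcount ec
      have hih := ih (le_of_lt hcj)
      omega
  -- conclusion at column j
  have hfin := key (j : ℕ) le_rfl
  have hBsub : pfSet A r B (j : ℕ) ⊆ Finset.univ.filter (fun i => r ≤ i ∧ A r j < B i j) := by
    intro i hi
    have hi' := mem_pfSet.mp hi
    exact Finset.mem_filter.mpr ⟨Finset.mem_univ _, hi'.1,
      hFB4 i hi'.1 (fun e' he' => hi'.2 e' he')⟩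
  have hGAj_sub : (Finset.univ.filter fun i => r ≤ i ∧ A r j < A i j)
      ⊆ pfSet A r A (j : ℕ) := by
    intro i hi
    rw [Finset.mem_filter] at hi
    obtain ⟨-, hi1, hi2⟩ := hi
    rw [mem_pfSet]
    refine ⟨hi1, ?_⟩
    by_contra hconx
    push_neg at hconx
    obtain ⟨e, he, hnee⟩ := hconx
    exact absurd hi2 (not_lt.mpr (hFA2 i hi1 j ⟨e, he, hnee⟩))
  have hrmem : r ∈ pfSet A r A (j : ℕ) := mem_pfSet.mpr ⟨le_rfl, fun e _ => rfl⟩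
  have hrnot : r ∉ (Finset.univ.filter fun i => r ≤ i ∧ A r j < A i j) := by
    rw [Finset.mem_filter]
    rintro ⟨-, -, hx⟩
    exact lt_irrefl _ hx
  have hAj : (Finset.univ.filter fun i => r ≤ i ∧ A r j < A i j).card + 1
      ≤ (pfSet A r A (j : ℕ)).card := by
    rw [← Finset.card_insert_of_notMem hrnot]
    apply Finset.card_le_card
    intro i hi
    rcases Finset.mem_insert.mp hi with rfl | hi
    · exact hrmem
    · exact hGAj_sub hi
  have hBj : (pfSet A r B (j : ℕ)).card
      ≤ (Finset.univ.filter fun i => r ≤ i ∧ A r j < B i j).card :=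
    Finset.card_le_card hBsub
  have hcntj := hcount j
  omega

end Stmt5

theorem stmt5 {p n : ℕ} (A : Fin p → Fin n → ℕ+) (hA : SemiStandard A) :
    IsStandard A ↔ ∀ h k : Fin p, h < k → IsStandard ![A h, A k] := by
  constructor
  · intro hS h k hhk
    have hC := Stmt5.std_imp_pairStd hA hS
    have h2 : SemiStandard ![A h, A k] := by
      intro i j hij
      fin_cases i <;> fin_cases j <;>
        simp only [Matrix.cons_val_zero, Matrix.cons_val_one, Matrix.head_cons]
      · exact Or.inl rfl
      · exact hA h k (le_of_lt hhk)
      · exact absurd hij (by decide)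
      · exact Or.inl rfl
    apply Stmt5.pairStd_imp_std h2
    intro h' k' hlt'
    fin_cases h' <;> fin_cases k'
    · exact absurd hlt' (by decide)
    · simp only [Matrix.cons_val_zero, Matrix.cons_val_one, Matrix.head_cons]
      exact hC h k hhk
    · exact absurd hlt' (by decide)
    · exact absurd hlt' (by decide)
  · intro hP
    apply Stmt5.pairStd_imp_std hA
    intro h k hhk
    have hS2 := hP h k hhk
    have hps := Stmt5.std_imp_pairStd hS2.1 hS2 (0 : Fin 2) 1 (by decide)
    simpa only [Matrix.cons_val_zero, Matrix.cons_val_one, Matrix.head_cons] using hps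
end

section
/- Any tableau obtained from a standard tableau by deleting a set of rows remains standard. -/
open Finset

def shiftEmb (p m fk : ℕ) (hlen : fk + m = p) : Fin m ↪ Fin p where
  toFun t := ⟨fk + t, by have := t.isLt; omega⟩
  inj' a b h := by
    have := congrArg Fin.val h
    simp only [Fin.val_mk] at this
    exact Fin.ext (by omega)

lemma tailmap {p : ℕ} (fk : Fin p) {γ : Type*} (L : List γ) (hlen : (fk : ℕ) + L.length = p)
    (d : γ) {δ : Type*} (φ : γ → δ) :
    ((Finset.univ.filter fun i : Fin p => fk ≤ i).val.map
      fun i : Fin p => φ (L.getD ((i : ℕ) - (fk : ℕ)) d)) = (L.map φ : Multiset δ) := by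
  have himg : Finset.map (shiftEmb p L.length fk hlen) Finset.univ
      = Finset.univ.filter fun i : Fin p => fk ≤ i := by
    ext i
    simp only [Finset.mem_map, Finset.mem_univ, true_and, Finset.mem_filter, shiftEmb,
      Function.Embedding.coeFn_mk]
    constructor
    · rintro ⟨t, rfl⟩
      rw [Fin.le_def]; exact Nat.le_add_right _ _
    · intro hi
      rw [Fin.le_def] at hi
      refine ⟨⟨(i : ℕ) - fk, by have := i.isLt; omega⟩, ?_⟩
      apply Fin.ext; show (fk : ℕ) + ((i : ℕ) - fk) = i; omega
  rw [← himg, Finset.map_val, Multiset.map_map]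
  have hco : ∀ t : Fin L.length,
      ((fun i : Fin p => φ (L.getD ((i : ℕ) - (fk : ℕ)) d)) ∘ (shiftEmb p L.length fk hlen)) t
        = φ (L.get t) := by
    intro t
    simp only [Function.comp, shiftEmb, Function.Embedding.coeFn_mk, Fin.val_mk]
    have h1 : (fk : ℕ) + (t : ℕ) - (fk : ℕ) = (t : ℕ) := by omega
    show φ (L.getD ((fk : ℕ) + (t : ℕ) - (fk : ℕ)) d) = φ (L.get t)
    rw [h1, List.getD_eq_getElem L d t.isLt]
    rfl
  rw [Multiset.map_congr rfl (fun t _ => hco t)]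
  have h2 : (Finset.univ.val.map fun t : Fin L.length => φ (L.get t)) =
      ((List.finRange L.length).map fun t => φ (L.get t) : Multiset δ) := by
    rw [Fin.univ_def]; rfl
  rw [h2]
  congr 1
  conv_rhs => rw [← List.map_get_finRange L]
  rw [List.map_map]
  rfl

lemma split_tail {p q : ℕ} (f : Fin q ↪o Fin p) (k : Fin q) {γ : Type*} (h : Fin p → γ) :
    ((Finset.univ.filter fun i : Fin p => f k ≤ i).val.map h)
    = ((Finset.univ.filter fun i : Fin p => f k ≤ i ∧ ∀ j, f j ≠ i).val.map h)
    + ((Finset.univ.filter fun j : Fin q => k ≤ j).val.map fun j : Fin q => h (f j)) := by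
  classical
  have hsplit : (Finset.univ.filter fun i : Fin p => f k ≤ i).val
      = ((Finset.univ.filter fun i : Fin p => f k ≤ i).val.filter fun i => ∀ j, f j ≠ i)
      + ((Finset.univ.filter fun i : Fin p => f k ≤ i).val.filter fun i => ¬ ∀ j, f j ≠ i) :=
    (Multiset.filter_add_not _ _).symm
  rw [hsplit, Multiset.map_add]
  congr 1
  · congr 1
    rw [← Finset.filter_val, Finset.filter_filter]
  · have himg : (Finset.univ.filter fun j : Fin q => k ≤ j).map f.toEmbedding
        = ((Finset.univ.filter fun i : Fin p => f k ≤ i).filter fun i => ¬ ∀ j, f j ≠ i) := by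
      ext i
      simp only [Finset.mem_map, Finset.mem_filter, Finset.mem_univ, true_and, not_forall,
        not_not]
      constructor
      · rintro ⟨j, hj, rfl⟩
        exact ⟨f.le_iff_le.mpr hj, ⟨j, rfl⟩⟩
      · rintro ⟨hi, j, rfl⟩
        exact ⟨j, f.le_iff_le.mp hi, rfl⟩
    have hval : ((Finset.univ.filter fun i : Fin p => f k ≤ i).val.filter
          fun i => ¬ ∀ j, f j ≠ i)
        = ((Finset.univ.filter fun i : Fin p => f k ≤ i).filter fun i => ¬ ∀ j, f j ≠ i).val := by
      simp [Finset.filter_val]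
    rw [hval, ← himg, Finset.map_val, Multiset.map_map]
    rfl

lemma split_univ {q : ℕ} (k : Fin q) {γ : Type*} (h : Fin q → γ) :
    (Finset.univ.val.map h : Multiset γ)
    = ((Finset.univ.filter fun j : Fin q => ¬ k ≤ j).val.map h)
    + ((Finset.univ.filter fun j : Fin q => k ≤ j).val.map h) := by
  classical
  rw [Finset.filter_val, Finset.filter_val, ← Multiset.map_add]
  congr 1
  rw [add_comm, Multiset.filter_add_not]

noncomputable instance lexRowLinearOrder (n : ℕ) : LinearOrder (Lex (Fin n → ℕ+)) :=
  @Pi.Lex.linearOrder (Fin n) (fun _ => ℕ+) _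
    (inferInstanceAs (WellFoundedLT (Fin n))) _

lemma sigmaGT_lt {n : ℕ} {a b : Fin n → ℕ+} : sigmaGT a b ↔ toLex a < toLex b := Iff.rfl

lemma sigmaGE_le {n : ℕ} {a b : Fin n → ℕ+} : sigmaGE a b ↔ toLex a ≤ toLex b := by
  rw [le_iff_lt_or_eq]
  constructor
  · rintro (rfl | h); exacts [Or.inr rfl, Or.inl h]
  · rintro (h | h); exacts [Or.inr h, Or.inl (toLex.injective h)]

theorem stmt7 {p q n : ℕ} (A : Fin p → Fin n → ℕ+) (hA : IsStandard A)
    (f : Fin q ↪o Fin p) : IsStandard (fun i => A (f i)) := by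
  classical
  obtain ⟨hAs, hAmin⟩ := hA
  have hgmono : ∀ i j : Fin p, i ≤ j → toLex (A i) ≤ toLex (A j) :=
    fun i j hij => sigmaGE_le.mp (hAs i j hij)
  refine ⟨fun i j hij => hAs (f i) (f j) (f.monotone hij), ?_⟩
  intro B hBs hsupp hne
  have hBmono : ∀ i j : Fin q, i ≤ j → toLex (B i) ≤ toLex (B j) :=
    fun i j hij => sigmaGE_le.mp (hBs i j hij)
  set S : Finset (Fin q) := Finset.univ.filter fun j => B j ≠ A (f j) with hS
  have hSne : S.Nonempty := by
    rcases Function.ne_iff.mp hne with ⟨j, hj⟩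
    exact ⟨j, by simp only [hS, Finset.mem_filter, Finset.mem_univ, true_and]; exact hj⟩
  set k := S.min' hSne with hkdef
  have hkS : B k ≠ A (f k) := by
    have := S.min'_mem hSne
    simpa only [hS, Finset.mem_filter, Finset.mem_univ, true_and] using this
  have hkmin : ∀ j : Fin q, j < k → B j = A (f j) := by
    intro j hj; by_contra hc
    have hjS : j ∈ S := by
      simp only [hS, Finset.mem_filter, Finset.mem_univ, true_and]; exact hc
    exact absurd (S.min'_le j hjS) (not_le.mpr hj)
  rcases lt_trichotomy (toLex (B k)) (toLex (A (f k))) with hlt | heq | hgt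
  · exact ⟨k, fun i hi => hkmin i hi, hlt⟩
  · exact absurd (toLex.injective heq) hkS
  · exfalso
    set g : Fin p → Lex (Fin n → ℕ+) := fun i => toLex (A i) with hg
    set tailA : Multiset (Lex (Fin n → ℕ+)) :=
      ((Finset.univ.filter fun i : Fin p => f k ≤ i ∧ ∀ j, f j ≠ i).val.map g) with htailA
    set tailB : Multiset (Lex (Fin n → ℕ+)) :=
      ((Finset.univ.filter fun j : Fin q => k ≤ j).val.map fun j : Fin q => toLex (B j))
      with htailB
    set M : Multiset (Lex (Fin n → ℕ+)) := tailA + tailB with hM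
    set L : List (Lex (Fin n → ℕ+)) := M.sort (· ≤ ·) with hL
    have hLs : L.Pairwise (· ≤ ·) := Multiset.pairwise_sort _ _
    have hLM : (L : Multiset (Lex (Fin n → ℕ+))) = M := Multiset.sort_eq _ _
    have hsplitg := split_tail f k g
    have hcard : Multiset.card M = (Finset.univ.filter fun i : Fin p => f k ≤ i).card := by
      have h1 := congrArg Multiset.card hsplitg
      simp only [Multiset.card_map, Multiset.card_add] at h1
      simp only [hM, htailA, htailB, Multiset.card_add, Multiset.card_map]
      rw [← h1]
      rfl
    have hficard : (Finset.univ.filter fun i : Fin p => f k ≤ i) = Finset.Ici (f k) := by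
      ext i; simp
    have hlen : ((f k : Fin p) : ℕ) + L.length = p := by
      rw [hL, Multiset.length_sort, hcard, hficard, Fin.card_Ici]
      have := (f k).isLt; omega
    set d : Lex (Fin n → ℕ+) := toLex (A (f k)) with hd
    set Cfun : Fin p → Lex (Fin n → ℕ+) :=
      (fun i => if (i : ℕ) < ((f k : Fin p) : ℕ) then g i
        else L.getD ((i : ℕ) - ((f k : Fin p) : ℕ)) d) with hCfun
    have hmemM : ∀ x ∈ M, toLex (A (f k)) ≤ x := by
      intro x hx
      rcases Multiset.mem_add.mp hx with hx | hx
      · obtain ⟨i, hi, rfl⟩ := Multiset.mem_map.mp hx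
        exact hgmono _ _ (Finset.mem_filter.mp (Finset.mem_val.mp hi)).2.1
      · obtain ⟨j, hj, rfl⟩ := Multiset.mem_map.mp hx
        have hj' := (Finset.mem_filter.mp (Finset.mem_val.mp hj)).2
        exact le_of_lt (lt_of_lt_of_le hgt (hBmono k j hj'))
    have hmemB : ∀ x ∈ tailB, toLex (A (f k)) < x := by
      intro x hx
      obtain ⟨j, hj, rfl⟩ := Multiset.mem_map.mp hx
      have hj' := (Finset.mem_filter.mp (Finset.mem_val.mp hj)).2
      exact lt_of_lt_of_le hgt (hBmono k j hj')
    have hgetM : ∀ t : ℕ, t < L.length → L.getD t d ∈ M := by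
      intro t ht
      rw [List.getD_eq_getElem L d ht, ← hLM]
      exact Multiset.mem_coe.mpr (List.getElem_mem ht)
    have hCmono : Monotone Cfun := by
      intro i j hij
      simp only [hCfun]
      by_cases hj : (j : ℕ) < ((f k : Fin p) : ℕ)
      · have hi : (i : ℕ) < ((f k : Fin p) : ℕ) := lt_of_le_of_lt hij hj
        rw [if_pos hi, if_pos hj]; exact hgmono i j hij
      · rw [if_neg hj]
        have hjlen : (j : ℕ) - ((f k : Fin p) : ℕ) < L.length := by
          have := j.isLt; omega
        by_cases hi : (i : ℕ) < ((f k : Fin p) : ℕ)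
        · rw [if_pos hi]
          refine le_trans (hgmono i (f k) (show i ≤ f k from le_of_lt hi)) ?_
          exact hmemM _ (hgetM _ hjlen)
        · rw [if_neg hi]
          have hilen : (i : ℕ) - ((f k : Fin p) : ℕ) < L.length := by
            have := i.isLt; omega
          rw [List.getD_eq_getElem L d hilen, List.getD_eq_getElem L d hjlen]
          have hle : (i : ℕ) - ((f k : Fin p) : ℕ) ≤ (j : ℕ) - ((f k : Fin p) : ℕ) := by
            have : (i : ℕ) ≤ (j : ℕ) := hij
            omega
          rcases eq_or_lt_of_le hle with he | hlt2
          · have : L[(i : ℕ) - ((f k : Fin p) : ℕ)]'hilen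
                = L[(j : ℕ) - ((f k : Fin p) : ℕ)]'hjlen := by
              congr 1
            exact le_of_eq this
          · exact hLs.rel_get_of_lt (show (⟨_, hilen⟩ : Fin L.length) < ⟨_, hjlen⟩ from hlt2)
    have hCss : SemiStandard (fun i => ofLex (Cfun i)) := by
      intro i j hij
      rw [sigmaGE_le]
      simpa using hCmono hij
    have htailsupp : ∀ c : Fin n,
        ((Finset.univ.filter fun j : Fin q => k ≤ j).val.map fun j : Fin q => B j c)
        = ((Finset.univ.filter fun j : Fin q => k ≤ j).val.map fun j : Fin q => A (f j) c) := by
      intro c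
      have h0 := hsupp c
      rw [split_univ k (fun j : Fin q => B j c),
        split_univ k (fun j : Fin q => A (f j) c)] at h0
      have hhead : ((Finset.univ.filter fun j : Fin q => ¬ k ≤ j).val.map
            fun j : Fin q => B j c)
          = ((Finset.univ.filter fun j : Fin q => ¬ k ≤ j).val.map
            fun j : Fin q => A (f j) c) := by
        apply Multiset.map_congr rfl
        intro j hj
        have hj' := (Finset.mem_filter.mp (Finset.mem_val.mp hj)).2
        rw [hkmin j (not_le.mp hj')]
      rw [hhead] at h0
      exact add_left_cancel h0
    have hCtailM : ((Finset.univ.filter fun i : Fin p => f k ≤ i).val.map Cfun) = M := by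
      have hcg : ∀ i ∈ (Finset.univ.filter fun i : Fin p => f k ≤ i).val,
          Cfun i = (fun i : Fin p => id (L.getD ((i : ℕ) - ((f k : Fin p) : ℕ)) d)) i := by
        intro i hi
        have hi' := (Finset.mem_filter.mp (Finset.mem_val.mp hi)).2
        have hi'' : ¬ ((i : ℕ) < ((f k : Fin p) : ℕ)) := by
          rw [Fin.le_def] at hi'; omega
        simp only [hCfun, id]
        rw [if_neg hi'']
      rw [Multiset.map_congr rfl hcg, tailmap (f k) L hlen d id, List.map_id, hLM]
    have hCsupp : suppEq (fun i => ofLex (Cfun i)) A := by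
      intro c
      set φ : Lex (Fin n → ℕ+) → ℕ+ := fun r => ofLex r c with hφ
      have hLHS : (Finset.univ.val.map fun i : Fin p => ofLex (Cfun i) c)
          = ((Finset.univ.filter fun i : Fin p => ¬ f k ≤ i).val.map fun i : Fin p => A i c)
            + (M.map φ) := by
        rw [split_univ (f k) (fun i : Fin p => ofLex (Cfun i) c)]
        congr 1
        · apply Multiset.map_congr rfl
          intro i hi
          have hi' := (Finset.mem_filter.mp (Finset.mem_val.mp hi)).2
          have hi'' : (i : ℕ) < ((f k : Fin p) : ℕ) := by
            rw [not_le] at hi'; exact hi'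
          simp only [hCfun, if_pos hi'', hg]
          rfl
        · have hcg : ∀ i ∈ (Finset.univ.filter fun i : Fin p => f k ≤ i).val,
              (fun i : Fin p => ofLex (Cfun i) c) i
                = (fun i : Fin p => φ (L.getD ((i : ℕ) - ((f k : Fin p) : ℕ)) d)) i := by
            intro i hi
            have hi' := (Finset.mem_filter.mp (Finset.mem_val.mp hi)).2
            have hi'' : ¬ ((i : ℕ) < ((f k : Fin p) : ℕ)) := by
              rw [Fin.le_def] at hi'; omega
            simp only [hCfun, hφ, if_neg hi'']
          rw [Multiset.map_congr rfl hcg, tailmap (f k) L hlen d φ, ← hLM]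
          rfl
      have hRHS : (Finset.univ.val.map fun i : Fin p => A i c)
          = ((Finset.univ.filter fun i : Fin p => ¬ f k ≤ i).val.map fun i : Fin p => A i c)
            + ((tailA.map φ)
              + ((Finset.univ.filter fun j : Fin q => k ≤ j).val.map
                  fun j : Fin q => A (f j) c)) := by
        rw [split_univ (f k) (fun i : Fin p => A i c)]
        congr 1
        rw [split_tail f k (fun i : Fin p => A i c)]
        congr 1
        rw [htailA, Multiset.map_map]
        rfl
      rw [hLHS, hRHS, hM, Multiset.map_add]
      congr 1
      congr 1
      rw [htailB, Multiset.map_map]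
      exact htailsupp c
    set v : Lex (Fin n → ℕ+) := toLex (A (f k)) with hv
    have hvB : tailB.count v = 0 :=
      Multiset.count_eq_zero.mpr (fun hmem => lt_irrefl _ (hmemB _ hmem))
    have hvI : 1 ≤ ((Finset.univ.filter fun j : Fin q => k ≤ j).val.map
        fun j : Fin q => g (f j)).count v := by
      apply Multiset.one_le_count_iff_mem.mpr
      exact Multiset.mem_map.mpr ⟨k, Finset.mem_val.mpr (by simp), rfl⟩
    have hMA : ((Finset.univ.filter fun i : Fin p => f k ≤ i).val.map g).count v
        = tailA.count v + ((Finset.univ.filter fun j : Fin q => k ≤ j).val.map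
            fun j : Fin q => g (f j)).count v := by
      rw [hsplitg, Multiset.count_add, htailA]
    have hMcount : M.count v = tailA.count v := by
      rw [hM, Multiset.count_add, hvB, add_zero]
    have hCne : (fun i => ofLex (Cfun i)) ≠ A := by
      intro hEq
      have hCg : ∀ i, Cfun i = g i := by
        intro i
        have h1 := congrFun hEq i
        have : toLex (ofLex (Cfun i)) = toLex (A i) := congrArg toLex h1
        simpa using this
      have h2 : ((Finset.univ.filter fun i : Fin p => f k ≤ i).val.map Cfun)
          = ((Finset.univ.filter fun i : Fin p => f k ≤ i).val.map g) :=
        Multiset.map_congr rfl (fun i _ => hCg i)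
      have h3 := congrArg (Multiset.count v) (hCtailM.symm.trans h2)
      rw [hMcount, hMA] at h3
      omega
    obtain ⟨m, hpre, hmlt⟩ := hAmin _ hCss hCsupp hCne
    have hmlt' : Cfun m < g m := by
      have h1 : toLex (ofLex (Cfun m)) < toLex (A m) := sigmaGT_lt.mp hmlt
      simpa using h1
    have hmfk : ((f k : Fin p) : ℕ) ≤ (m : ℕ) := by
      by_contra hc
      push_neg at hc
      have : Cfun m = g m := by simp only [hCfun, if_pos hc]
      rw [this] at hmlt'
      exact lt_irrefl _ hmlt'
    have hmlen : (m : ℕ) - ((f k : Fin p) : ℕ) < L.length := by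
      have := m.isLt; omega
    have hCmM : Cfun m ∈ M := by
      have h1 : Cfun m = L.getD ((m : ℕ) - ((f k : Fin p) : ℕ)) d := by
        simp only [hCfun, if_neg (not_lt.mpr hmfk)]
      rw [h1]
      exact hgetM _ hmlen
    have hvCm : v ≤ Cfun m := hmemM _ hCmM
    have key : ∀ i : Fin p, f k ≤ i → g i = v → Cfun i = v := by
      intro i hfi hgi
      by_cases him : i < m
      · have h1 := hpre i him
        have h2 : Cfun i = g i := by
          have := congrArg toLex h1
          simpa using this
        rw [h2, hgi]
      · exfalso
        push_neg at him
        have h3 : g m ≤ v := hgi ▸ hgmono m i him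
        exact lt_irrefl _ (lt_of_le_of_lt (h3.trans hvCm) hmlt')
    have hcnt_le : ((Finset.univ.filter fun i : Fin p => f k ≤ i).val.map g).count v
        ≤ ((Finset.univ.filter fun i : Fin p => f k ≤ i).val.map Cfun).count v := by
      rw [Multiset.count_map, Multiset.count_map]
      apply Multiset.card_le_card
      have e1 : ((Finset.univ.filter fun i : Fin p => f k ≤ i).val.filter
            fun i => v = g i)
          = ((Finset.univ.filter fun i : Fin p => f k ≤ i).val.filter
            fun i => v = g i ∧ f k ≤ i) := by
        apply Multiset.filter_congr
        intro x hx
        have hx' := (Finset.mem_filter.mp (Finset.mem_val.mp hx)).2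
        simp [hx']
      rw [e1]
      apply Multiset.monotone_filter_right
      rintro i ⟨h1, h2⟩
      exact (key i h2 h1.symm).symm
    have hfin1 : tailA.count v + 1
        ≤ ((Finset.univ.filter fun i : Fin p => f k ≤ i).val.map g).count v := by
      rw [hMA]; omega
    have hfin2 : ((Finset.univ.filter fun i : Fin p => f k ≤ i).val.map Cfun).count v
        = tailA.count v := by
      rw [hCtailM, hMcount]
    omega
end

section
/- Any tableau obtained from a standard p×n tableau by deleting the last (rightmost) column is standard. -/
open Finset

lemma sigmaGT_irrefl {n : ℕ} (a : Fin n → ℕ+) : ¬ sigmaGT a a := by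
  rintro ⟨k, -, hk⟩; exact lt_irrefl _ hk

lemma sigmaGT_trans {n : ℕ} {a b c : Fin n → ℕ+} (h1 : sigmaGT a b) (h2 : sigmaGT b c) :
    sigmaGT a c := by
  obtain ⟨k1, hp1, hl1⟩ := h1
  obtain ⟨k2, hp2, hl2⟩ := h2
  rcases lt_trichotomy k1 k2 with h | h | h
  · exact ⟨k1, fun i hi => (hp1 i hi).trans (hp2 i (hi.trans h)), (hp2 k1 h) ▸ hl1⟩
  · subst h
    exact ⟨k1, fun i hi => (hp1 i hi).trans (hp2 i hi), hl1.trans hl2⟩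
  · exact ⟨k2, fun i hi => (hp1 i (hi.trans h)).trans (hp2 i hi), (hp1 k2 h) ▸ hl2⟩

lemma sigmaGT_total {n : ℕ} {a b : Fin n → ℕ+} (h : a ≠ b) : sigmaGT a b ∨ sigmaGT b a := by
  have hne : (univ.filter fun k => a k ≠ b k).Nonempty := by
    by_contra hc
    rw [not_nonempty_iff_eq_empty, filter_eq_empty_iff] at hc
    exact h (funext fun i => not_not.mp (hc (mem_univ i)))
  set k := (univ.filter fun k => a k ≠ b k).min' hne with hk
  have hkmem := (univ.filter fun k => a k ≠ b k).min'_mem hne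
  rw [mem_filter] at hkmem
  have hpre : ∀ i : Fin _, i < k → a i = b i := by
    intro i hi
    by_contra hc
    exact absurd (min'_le _ i (mem_filter.mpr ⟨mem_univ i, hc⟩)) (not_le.mpr hi)
  rcases lt_or_gt_of_ne (fun h' : a k = b k => hkmem.2 h') with h' | h'
  · exact Or.inl ⟨k, hpre, h'⟩
  · exact Or.inr ⟨k, fun i hi => (hpre i hi).symm, h'⟩

lemma sigmaGT_lift {n : ℕ} {u v : Fin (n + 1) → ℕ+}
    (h : sigmaGT (fun j : Fin n => u j.castSucc) (fun j : Fin n => v j.castSucc)) :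
    sigmaGT u v := by
  obtain ⟨m, hp, hl⟩ := h
  refine ⟨m.castSucc, ?_, hl⟩
  intro c hc
  have hcm : (c : ℕ) < (m : ℕ) := by simpa [Fin.lt_def] using hc
  have hcn : (c : ℕ) < n := hcm.trans m.isLt
  have hce : c = (⟨c, hcn⟩ : Fin n).castSucc := Fin.ext rfl
  rw [hce]
  exact hp ⟨c, hcn⟩ (by simpa [Fin.lt_def] using hcm)

lemma sigmaGE_restrict {n : ℕ} {u v : Fin (n + 1) → ℕ+} (h : sigmaGE u v) :
    sigmaGE (fun j : Fin n => u j.castSucc) (fun j : Fin n => v j.castSucc) := by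
  rcases h with h | ⟨κ, hp, hl⟩
  · left; funext c; rw [h]
  · by_cases hκ : (κ : ℕ) < n
    · right
      refine ⟨⟨κ, hκ⟩, ?_, ?_⟩
      · intro c hc
        exact hp c.castSucc (by simpa [Fin.lt_def] using hc)
      · show u ((⟨(κ : ℕ), hκ⟩ : Fin n).castSucc) < v ((⟨(κ : ℕ), hκ⟩ : Fin n).castSucc)
        rw [show ((⟨(κ : ℕ), hκ⟩ : Fin n).castSucc) = κ from Fin.ext rfl]
        exact hl
    · left
      funext c
      refine hp c.castSucc ?_
      have h1 := κ.isLt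
      have h2 := c.isLt
      simp only [Fin.lt_def, Fin.coe_castSucc]
      omega

lemma tabGT_asymm {p n : ℕ} {X Y : Fin p → Fin n → ℕ+} (h1 : tabGT X Y) (h2 : tabGT Y X) :
    False := by
  obtain ⟨k1, hp1, hg1⟩ := h1
  obtain ⟨k2, hp2, hg2⟩ := h2
  rcases lt_trichotomy k1 k2 with h | h | h
  · rw [hp2 k1 h] at hg1; exact sigmaGT_irrefl _ hg1
  · subst h; exact sigmaGT_asymm hg1 hg2
  · rw [hp1 k2 h] at hg2; exact sigmaGT_irrefl _ hg2

theorem stmt8 {p n : ℕ} (A : Fin p → Fin (n + 1) → ℕ+) (hA : IsStandard A) :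
    IsStandard (fun i (j : Fin n) => A i j.castSucc) := by
  constructor
  · intro i j hij
    exact sigmaGE_restrict (hA.1 i j hij)
  · intro B hB hsupp hne
    have hne' : (univ.filter fun i : Fin p => B i ≠ fun j : Fin n => A i j.castSucc).Nonempty := by
      by_contra hc
      rw [not_nonempty_iff_eq_empty, filter_eq_empty_iff] at hc
      exact hne (funext fun i => not_not.mp (hc (mem_univ i)))
    set k := (univ.filter fun i : Fin p => B i ≠ fun j : Fin n => A i j.castSucc).min' hne'
      with hkdef
    have hkmem := (univ.filter fun i : Fin p => B i ≠ fun j : Fin n => A i j.castSucc).min'_mem hne'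
    rw [mem_filter] at hkmem
    have hkne : B k ≠ fun j : Fin n => A k j.castSucc := hkmem.2
    have hkpre : ∀ i : Fin p, i < k → B i = fun j : Fin n => A i j.castSucc := by
      intro i hi; by_contra hc
      exact absurd (min'_le _ i (mem_filter.mpr ⟨mem_univ i, hc⟩)) (not_le.mpr hi)
    refine ⟨k, fun i hi => hkpre i hi, ?_⟩
    rcases sigmaGT_total hkne with hgt | hgt
    · exact hgt
    exfalso
    -- hgt : sigmaGT (fun j => A k j.castSucc) (B k)
    set f : Fin (p - (k : ℕ)) → ℕ+ :=
      fun t => A ⟨(k : ℕ) + t, by have h1 := t.isLt; have h2 := k.isLt; omega⟩ (Fin.last n)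
      with hfdef
    set σp := Tuple.sort f with hσdef
    set e : Fin p → ℕ+ :=
      fun i => if h : (k : ℕ) ≤ (i : ℕ) then
        f (σp ⟨(i : ℕ) - (k : ℕ), by have h1 := i.isLt; have h2 := k.isLt; omega⟩) else 1
      with hedef
    set C : Fin p → Fin (n + 1) → ℕ+ :=
      fun i j => if i < k then A i j
        else if h : (j : ℕ) < n then B i ⟨(j : ℕ), h⟩ else e i with hCdef
    have hClt : ∀ i : Fin p, i < k → C i = A i := by
      intro i hi; funext j; simp only [hCdef]; rw [if_pos hi]
    have hCge : ∀ i : Fin p, ¬ i < k → ∀ j : Fin n, C i j.castSucc = B i j := by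
      intro i hi j
      simp only [hCdef]
      rw [if_neg hi, dif_pos (show ((j.castSucc : Fin (n + 1)) : ℕ) < n from j.isLt)]
      congr 1
    have hClast : ∀ i : Fin p, ¬ i < k → C i (Fin.last n) = e i := by
      intro i hi
      simp only [hCdef]
      rw [if_neg hi, dif_neg (by simp)]
    have hCres : ∀ i : Fin p, ¬ i < k → (fun j : Fin n => C i j.castSucc) = B i :=
      fun i hi => funext fun j => hCge i hi j
    have hAres : ∀ i : Fin p, i < k →
        (fun j : Fin n => C i j.castSucc) = fun j : Fin n => A i j.castSucc :=
      fun i hi => funext fun j => by rw [hClt i hi]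
    have hNS : ∀ i j : Fin p, i < k → ¬ j < k →
        (fun j' : Fin n => A i j'.castSucc) ≠ B j := by
      intro i j hik hjk heq
      have hBij : B i = B j := by rw [hkpre i hik, heq]
      have hBk : B k = B i := by
        rcases hB i k (le_of_lt hik) with h | h
        · exact h.symm
        · exfalso
          rcases hB k j (not_lt.mp hjk) with h' | h'
          · rw [h', ← hBij] at h; exact sigmaGT_irrefl _ h
          · have h'' := sigmaGT_trans h h'
            rw [← hBij] at h''; exact sigmaGT_irrefl _ h''
      have hBkA : B k = fun j' : Fin n => A i j'.castSucc := by rw [hBk, hkpre i hik]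
      rcases sigmaGE_restrict (hA.1 i k (le_of_lt hik)) with h | h
      · exact hkne (by rw [hBkA, h])
      · have hgt' := hgt
        rw [hBkA] at hgt'
        exact sigmaGT_asymm h hgt'
    have hEmono : ∀ i j : Fin p, ¬ i < k → i ≤ j → e i ≤ e j := by
      intro i j hik hij
      have h1 : (k : ℕ) ≤ (i : ℕ) := by rw [not_lt, Fin.le_def] at hik; exact hik
      have hij' : (i : ℕ) ≤ (j : ℕ) := Fin.le_def.mp hij
      have h2 : (k : ℕ) ≤ (j : ℕ) := le_trans h1 hij'
      simp only [hedef]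
      rw [dif_pos h1, dif_pos h2, hσdef]
      exact Tuple.monotone_sort f (by simp only [Fin.le_def]; omega)
    have hknotlt : ¬ k < k := lt_irrefl k
    have hCsemi : SemiStandard C := by
      intro i j hij
      by_cases hik : i < k
      · by_cases hjk : j < k
        · rw [hClt i hik, hClt j hjk]; exact hA.1 i j hij
        · right
          apply sigmaGT_lift
          rw [hCres j hjk, hAres i hik]
          rcases hB i j hij with h | h
          · exact absurd (show (fun j' : Fin n => A i j'.castSucc) = B j from by
              rw [← hkpre i hik]; exact h) (hNS i j hik hjk)
          · rw [← hkpre i hik]; exact h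
      · have hjk : ¬ j < k := fun hc => hik (lt_of_le_of_lt hij hc)
        rcases hB i j hij with h | h
        · have hee := hEmono i j hik hij
          rcases eq_or_lt_of_le hee with he | he
          · left
            funext c
            by_cases hc : (c : ℕ) < n
            · have hcc : c = (⟨(c : ℕ), hc⟩ : Fin n).castSucc := Fin.ext rfl
              rw [hcc, hCge i hik, hCge j hjk, h]
            · have hcl : c = Fin.last n := Fin.ext (by have := c.isLt; simp; omega)
              rw [hcl, hClast i hik, hClast j hjk, he]
          · right
            refine ⟨Fin.last n, ?_, ?_⟩
            · intro c hcl
              have hc : (c : ℕ) < n := by simpa [Fin.lt_def] using hcl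
              have hcc : c = (⟨(c : ℕ), hc⟩ : Fin n).castSucc := Fin.ext rfl
              rw [hcc, hCge i hik, hCge j hjk, h]
            · rw [hClast i hik, hClast j hjk]; exact he
        · right
          apply sigmaGT_lift
          rw [hCres i hik, hCres j hjk]
          exact h
    have hCsupp : suppEq C A := by
      intro j
      by_cases hj : (j : ℕ) < n
      · have hcol : ∀ i : Fin p, C i j = B i ⟨(j : ℕ), hj⟩ := by
          intro i
          by_cases hik : i < k
          · rw [hClt i hik]
            have hbi := congrFun (hkpre i hik) (⟨(j : ℕ), hj⟩ : Fin n)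
            rw [hbi, show ((⟨(j : ℕ), hj⟩ : Fin n).castSucc) = j from Fin.ext rfl]
          · have hci := hCge i hik ⟨(j : ℕ), hj⟩
            rw [show ((⟨(j : ℕ), hj⟩ : Fin n).castSucc) = j from Fin.ext rfl] at hci
            exact hci
        calc Multiset.map (fun i => C i j) univ.val
            = Multiset.map (fun i => B i ⟨(j : ℕ), hj⟩) univ.val :=
              Multiset.map_congr rfl (fun x _ => hcol x)
          _ = Multiset.map (fun i => A i j) univ.val := by
              have hs := hsupp ⟨(j : ℕ), hj⟩
              simp only at hs
              rw [show ((⟨(j : ℕ), hj⟩ : Fin n).castSucc) = j from Fin.ext rfl] at hs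
              exact hs
      · have hjl : j = Fin.last n := Fin.ext (by have := j.isLt; simp; omega)
        subst hjl
        rw [show (univ.val : Multiset (Fin p)) = Multiset.filter (fun i => i < k) univ.val
          + Multiset.filter (fun i => ¬ i < k) univ.val from (Multiset.filter_add_not _ _).symm]
        rw [Multiset.map_add, Multiset.map_add]
        congr 1
        · exact Multiset.map_congr rfl
            (fun x hx => by rw [hClt x (Multiset.mem_filter.mp hx).2])
        · have hembinj : Function.Injective (fun t : Fin (p - (k : ℕ)) =>
              (⟨(k : ℕ) + t, by have h1 := t.isLt; have h2 := k.isLt; omega⟩ : Fin p)) := by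
            intro a b hab
            have hv := congrArg Fin.val hab
            simp only at hv
            exact Fin.ext (by omega)
          set emb : Fin (p - (k : ℕ)) ↪ Fin p := ⟨_, hembinj⟩ with hembdef
          have hfil : Finset.filter (fun i : Fin p => ¬ i < k) univ = Finset.map emb univ := by
            ext x
            simp only [mem_filter, mem_univ, true_and, mem_map, hembdef,
              Function.Embedding.coeFn_mk]
            constructor
            · intro hx
              have hx' : (k : ℕ) ≤ (x : ℕ) := by rw [not_lt, Fin.le_def] at hx; exact hx
              exact ⟨⟨(x : ℕ) - k, by have := x.isLt; omega⟩,
                Fin.ext (by simp; omega)⟩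
            · rintro ⟨t, -, rfl⟩
              simp only [Fin.lt_def]
              omega
          have hv : Multiset.filter (fun i : Fin p => ¬ i < k) univ.val
              = Multiset.map (⇑emb) univ.val := by
            have hc := congrArg Finset.val hfil
            rwa [Finset.filter_val, Finset.map_val] at hc
          rw [hv, Multiset.map_map, Multiset.map_map]
          have hL : ((fun i => C i (Fin.last n)) ∘ ⇑emb) = f ∘ ⇑σp := by
            funext t
            simp only [Function.comp, hembdef, Function.Embedding.coeFn_mk]
            rw [hClast _ (by simp only [Fin.lt_def]; omega)]
            simp only [hedef]
            rw [dif_pos (by simp)]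
            exact congrArg (fun x => f (σp x)) (Fin.ext (by simp))
          have hR : ((fun i => A i (Fin.last n)) ∘ ⇑emb) = f := by
            funext t
            simp only [Function.comp, hembdef, Function.Embedding.coeFn_mk, hfdef]
          rw [hL, hR, hσdef, ← Multiset.map_map]
          congr 1
          have h1 : (Finset.univ.map (Tuple.sort f).toEmbedding) = Finset.univ :=
            Finset.map_univ_equiv _
          have h2 := congrArg Finset.val h1
          rwa [Finset.map_val, Equiv.coe_toEmbedding] at h2
    have hCne : C ≠ A := by
      intro hc
      obtain ⟨m, hmp, hml⟩ := hgt
      have h1 : C k m.castSucc = B k m := hCge k hknotlt m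
      rw [hc] at h1
      exact absurd h1 (ne_of_lt hml)
    have htab : tabGT A C := by
      refine ⟨k, fun i hi => (hClt i hi).symm, ?_⟩
      apply sigmaGT_lift
      rw [hCres k hknotlt]
      exact hgt
    exact tabGT_asymm htab (hA.2 C hCsemi hCsupp hCne)
end

section
/- Let D ⊆ ℤ₊ⁿ be a standardizable n-dimensional Ferrers diagram. Let [a; b] and [p; q] be two distinct 2×n semi-standard tableaux with equal column multisets (supp([p;q]) = supp([a;b])). If [p; q] is standard and a, b ∈ D, then p ∈ D and q ∈ D. -/
open Finset

private lemma pair_cases9 {α : Type*} {x y z w : α}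
    (h : (x ::ₘ y ::ₘ 0 : Multiset α) = z ::ₘ w ::ₘ 0) :
    (x = z ∧ y = w) ∨ (x = w ∧ y = z) := by
  classical
  rcases Multiset.cons_eq_cons.mp h with ⟨h1, h2⟩ | ⟨hxz, cs, h1, h2⟩
  · exact Or.inl ⟨h1, by simpa using h2⟩
  · have hc := congrArg Multiset.card h1
    simp only [Multiset.card_cons, Multiset.card_zero] at hc
    have hcs : cs = 0 := Multiset.card_eq_zero.mp (by omega)
    subst hcs
    simp only [Multiset.cons_zero] at h1 h2
    exact Or.inr ⟨Multiset.singleton_inj.mp h2.symm, Multiset.singleton_inj.mp h1⟩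

theorem stmt9 {n : ℕ} (D : Set (Fin n → ℕ+)) (hD : IsFerrers D)
    (hS : Standardizable D) (a b p q : Fin n → ℕ+)
    (hab : SemiStandard ![a, b]) (hpq : SemiStandard ![p, q])
    (hsupp : suppEq ![p, q] ![a, b]) (hne : ![a, b] ≠ ![p, q])
    (hstd : IsStandard ![p, q]) (haD : a ∈ D) (hbD : b ∈ D) :
    p ∈ D ∧ q ∈ D := by
  classical
  have col : ∀ j, (p j = a j ∧ q j = b j) ∨ (p j = b j ∧ q j = a j) := by
    intro j
    have h' : (![p,q] 0 j ::ₘ ![p,q] 1 j ::ₘ 0 : Multiset ℕ+)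
        = (![a,b] 0 j ::ₘ ![a,b] 1 j ::ₘ 0) := hsupp j
    simp only [Matrix.cons_val_zero, Matrix.cons_val_one, Matrix.head_cons] at h'
    exact pair_cases9 h'
  have hpq01 : sigmaGE p q := by
    have := hpq 0 1 (by decide)
    simpa using this
  have hab01 : sigmaGE a b := by
    have := hab 0 1 (by decide)
    simpa using this
  rcases hab01 with heq | ⟨k, hpre, hk⟩
  · exfalso
    apply hne
    have hp : p = a := funext fun j => by
      rcases col j with ⟨h1,_⟩ | ⟨h1,_⟩
      · exact h1
      · rw [h1, ← congrFun heq j]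
    have hq : q = b := funext fun j => by
      rcases col j with ⟨_,h2⟩ | ⟨_,h2⟩
      · exact h2
      · rw [h2, congrFun heq j]
    rw [hp, hq]
  · have hkne : a k ≠ b k := ne_of_lt hk
    have hltk : ∀ j, j < k → p j = a j ∧ q j = a j := by
      intro j hj
      have hb := hpre j hj
      rcases col j with ⟨h1,h2⟩ | ⟨h1,h2⟩
      · exact ⟨h1, by rw [h2, ← hb]⟩
      · exact ⟨by rw [h1, ← hb], h2⟩
    have hcolk : p k = a k ∧ q k = b k := by
      rcases col k with h | ⟨h1, h2⟩
      · exact h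
      · exfalso
        rcases hpq01 with heq | ⟨k', hpre', hk'⟩
        · have := congrFun heq k
          rw [h1, h2] at this
          exact hkne this.symm
        · rcases lt_trichotomy k' k with h' | h' | h'
          · have h2 := hltk k' h'
            rw [h2.1, h2.2] at hk'
            exact lt_irrefl _ hk'
          · subst h'
            rw [h1, h2] at hk'
            exact lt_irrefl _ (hk.trans hk')
          · have := hpre' k h'
            rw [h1, h2] at this
            exact hkne this.symm
    have hgtk : ∀ j, k < j → p j = max (a j) (b j) ∧ q j = min (a j) (b j) := by
      intro j hj
      by_cases habj : a j = b j
      · rcases col j with ⟨h1,h2⟩ | ⟨h1,h2⟩ <;> simp [h1, h2, habj]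
      · have key : p j = max (a j) (b j) := by
          by_contra hmax
          -- then p j < q j and swapping column j gives a smaller semistandard tableau
          have hplt : p j < q j := by
            rcases max_choice (a j) (b j) with hm | hm
            · rcases col j with ⟨h1, h2⟩ | ⟨h1, h2⟩
              · exact absurd (h1.trans hm.symm) hmax
              · rw [h1, h2]
                exact lt_of_le_of_ne (hm ▸ le_max_right (a j) (b j)) (Ne.symm habj)
            · rcases col j with ⟨h1, h2⟩ | ⟨h1, h2⟩
              · rw [h1, h2]
                exact lt_of_le_of_ne (hm ▸ le_max_left (a j) (b j)) habj
              · exact absurd (h1.trans hm.symm) hmax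
          set p' : Fin n → ℕ+ := fun i => if i = j then q j else p i with hp'def
          set q' : Fin n → ℕ+ := fun i => if i = j then p j else q i with hq'def
          have hp'j : p' j = q j := by simp [hp'def]
          have hq'j : q' j = p j := by simp [hq'def]
          have hp'ne : ∀ i, i ≠ j → p' i = p i := fun i hi => by simp [hp'def, hi]
          have hq'ne : ∀ i, i ≠ j → q' i = q i := fun i hi => by simp [hq'def, hi]
          have hBss : SemiStandard ![p', q'] := by
            intro i i' hle
            fin_cases i <;> fin_cases i'
            · exact Or.inl rfl
            · right
              refine ⟨k, ?_, ?_⟩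
              · intro i hi
                have hij : i ≠ j := ne_of_lt (hi.trans hj)
                have h2 := hltk i hi
                simp only [Fin.mk_zero, Fin.mk_one, Matrix.cons_val_zero,
                  Matrix.cons_val_one, Matrix.head_cons]
                rw [hp'ne i hij, hq'ne i hij, h2.1, h2.2]
              · have hkj : (k : Fin n) ≠ j := ne_of_lt hj
                simp only [Fin.mk_zero, Fin.mk_one, Matrix.cons_val_zero,
                  Matrix.cons_val_one, Matrix.head_cons]
                rw [hp'ne k hkj, hq'ne k hkj, hcolk.1, hcolk.2]
                exact hk
            · exact absurd hle (by decide)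
            · exact Or.inl rfl
          have hBsupp : suppEq ![p', q'] ![p, q] := by
            intro i
            show (p' i ::ₘ q' i ::ₘ 0 : Multiset ℕ+) = p i ::ₘ q i ::ₘ 0
            by_cases hij : i = j
            · subst hij
              rw [hp'j, hq'j]
              exact Multiset.cons_swap _ _ _
            · rw [hp'ne i hij, hq'ne i hij]
          have hBne : ![p', q'] ≠ ![p, q] := by
            intro h
            have := congrFun (congrFun h 0) j
            simp only [Matrix.cons_val_zero] at this
            rw [hp'j] at this
            exact lt_irrefl _ (this ▸ hplt)
          obtain ⟨r, hr1, hr2⟩ := hstd.2 ![p', q'] hBss hBsupp hBne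
          fin_cases r
          · simp only [Fin.mk_zero, Matrix.cons_val_zero] at hr2
            obtain ⟨t, ht1, ht2⟩ := hr2
            by_cases htj : t = j
            · subst htj
              rw [hp'j] at ht2
              exact lt_irrefl _ (hplt.trans ht2)
            · rw [hp'ne t htj] at ht2
              exact lt_irrefl _ ht2
          · have h0 := hr1 0 (by decide)
            simp only [Fin.mk_zero, Matrix.cons_val_zero] at h0
            have := congrFun h0 j
            rw [hp'j] at this
            exact lt_irrefl _ (this ▸ hplt)
        refine ⟨key, ?_⟩
        rcases col j with ⟨h1, h2⟩ | ⟨h1, h2⟩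
        · have hba : b j ≤ a j := (h1 ▸ key) ▸ le_max_right (a j) (b j)
          rw [h2, min_eq_right hba]
        · have hba : a j ≤ b j := (h1 ▸ key) ▸ le_max_left (a j) (b j)
          rw [h2, min_eq_left hba]
    have hp : p = fun i => if i ≤ k then a i else max (a i) (b i) := by
      funext i
      rcases lt_trichotomy i k with h | h | h
      · rw [if_pos (le_of_lt h), (hltk i h).1]
      · subst h
        rw [if_pos le_rfl, hcolk.1]
      · rw [if_neg (not_le.mpr h), (hgtk i h).1]
    have hq : ∀ i, q i ≤ b i := by
      intro i
      rcases lt_trichotomy i k with h | h | h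
      · rw [(hltk i h).2, hpre i h]
      · subst h
        rw [hcolk.2]
      · rw [(hgtk i h).2]
        exact min_le_right _ _
    refine ⟨?_, hD.2.2 b hbD q hq⟩
    rw [hp]
    exact hS a haD b hbD (fun h => hkne (congrFun h k)) k hpre hk
end

section
/- If D ⊆ ℤ₊ⁿ is a standardizable Ferrers diagram and r ≥ 1, then the Cartesian product D × [r] ⊆ ℤ₊^{n+1} is a standardizable (n+1)-dimensional Ferrers diagram. -/
open Finset

theorem stmt10 {n : ℕ} (D : Set (Fin n → ℕ+)) (hD : IsFerrers D)
    (hS : Standardizable D) (r : ℕ+) :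
    IsFerrers {x : Fin (n + 1) → ℕ+ |
        (fun i : Fin n => x i.castSucc) ∈ D ∧ x (Fin.last n) ≤ r} ∧
    Standardizable {x : Fin (n + 1) → ℕ+ |
        (fun i : Fin n => x i.castSucc) ∈ D ∧ x (Fin.last n) ≤ r} := by
  set E : Set (Fin (n + 1) → ℕ+) := {x : Fin (n + 1) → ℕ+ |
      (fun i : Fin n => x i.castSucc) ∈ D ∧ x (Fin.last n) ≤ r} with hE
  constructor
  · refine ⟨?_, ?_, ?_⟩
    · obtain ⟨d, hd⟩ := hD.1
      refine ⟨Fin.snoc d 1, ?_, ?_⟩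
      · simpa [Fin.snoc_castSucc] using hd
      · simp [Fin.snoc_last]
    · have hsub : E ⊆ (fun p : (Fin n → ℕ+) × ℕ+ => Fin.snoc p.1 p.2) ''
          (D ×ˢ Set.Iic r) := by
        rintro x ⟨hx1, hx2⟩
        refine ⟨⟨fun i => x i.castSucc, x (Fin.last n)⟩, ⟨hx1, hx2⟩, ?_⟩
        funext i
        refine Fin.lastCases ?_ ?_ i
        · simp [Fin.snoc_last]
        · intro j; simp [Fin.snoc_castSucc]
      exact Set.Finite.subset (Set.Finite.image _ (Set.Finite.prod hD.2.1 (Set.finite_Iic r))) hsub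
    · rintro b ⟨hb1, hb2⟩ a ha
      refine ⟨hD.2.2 _ hb1 _ fun i => ha i.castSucc, le_trans (ha (Fin.last n)) hb2⟩
  · rintro a ⟨ha1, ha2⟩ b ⟨hb1, hb2⟩ hab k hpre hk
    refine Fin.lastCases ?_ ?_ k hpre hk
    · intro _ _
      have : (fun i : Fin (n+1) => if i ≤ Fin.last n then a i else max (a i) (b i)) = a := by
        funext i; simp [Fin.le_last]
      rw [this]; exact ⟨ha1, ha2⟩
    · intro k' hpre hk
      have hne : (fun i : Fin n => a i.castSucc) ≠ (fun i : Fin n => b i.castSucc) := by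
        intro h
        have := congrFun h k'
        exact absurd this (ne_of_lt hk)
      have hpre' : ∀ i : Fin n, i < k' → a i.castSucc = b i.castSucc := by
        intro i hi
        exact hpre i.castSucc (by simpa [Fin.castSucc_lt_castSucc_iff] using hi)
      have hmem := hS _ ha1 _ hb1 hne k' hpre' hk
      constructor
      · have : (fun i : Fin n =>
            (fun j : Fin (n+1) => if j ≤ k'.castSucc then a j else max (a j) (b j)) i.castSucc)
            = (fun i : Fin n => if i ≤ k' then a i.castSucc
                else max (a i.castSucc) (b i.castSucc)) := by
          funext i
          simp [Fin.castSucc_le_castSucc_iff]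
        rw [this]; exact hmem
      · have hlt : ¬ (Fin.last n ≤ k'.castSucc) := by
          simp [Fin.le_castSucc_iff]
          exact Fin.castSucc_lt_last k'
        simp only [Set.mem_setOf_eq, hlt, if_neg]
        exact max_le ha2 hb2
end

section
/- Let D be an n-dimensional Ferrers diagram with associated squarefree monomial x_a = ∏_{i=1}^n x_{i,a_i} in the polynomial ring K[x_{i,j} : i ∈ [n], j ∈ [m]]. Suppose u = ∏_{ℓ=1}^w x_{a^ℓ} and v = ∏_{ℓ=1}^w x_{b^ℓ} are products of w generators of the Ferrers ideal (a^ℓ, b^ℓ ∈ D), and suppose for some variable x_{i₀,j₀}: deg_z(u) = deg_z(v) for all variables z preceding x_{i₀,j₀} in the order x_{1,1},…,x_{1,m},x_{2,1},…,x_{n,m}, while deg_{x_{i₀,j₀}}(u) < deg_{x_{i₀,j₀}}(v). Then there exist ℓ ∈ [w] and j₁ with j₀ < j₁ ≤ m such that a^ℓ_{i₀} = j₁ and the tuple obtained from a^ℓ by replacing its i₀-th coordinate with j₀ lies in D. -/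
open Finset

theorem stmt13 {n w : ℕ} (D : Set (Fin n → ℕ+)) (hD : IsFerrers D)
    (m : ℕ) (hm : ∀ x ∈ D, ∀ i, (x i : ℕ) ≤ m)
    (a b : Fin w → Fin n → ℕ+)
    (ha : ∀ ℓ, a ℓ ∈ D) (hb : ∀ ℓ, b ℓ ∈ D)
    (i₀ : Fin n) (j₀ : ℕ) (hj₀ : 0 < j₀) (hj₀m : j₀ ≤ m)
    (hpre : ∀ (i : Fin n) (j : ℕ), (i < i₀ ∨ (i = i₀ ∧ j < j₀)) →
      degOf a i j = degOf b i j)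
    (hlt : degOf a i₀ j₀ < degOf b i₀ j₀) :
    ∃ (ℓ : Fin w) (j₁ : ℕ+), j₀ < (j₁ : ℕ) ∧ (j₁ : ℕ) ≤ m ∧ a ℓ i₀ = j₁ ∧
      Function.update (a ℓ) i₀ ⟨j₀, hj₀⟩ ∈ D := by
  by_cases h : ∃ ℓ : Fin w, j₀ < (a ℓ i₀ : ℕ)
  · obtain ⟨ℓ, hℓ⟩ := h
    refine ⟨ℓ, a ℓ i₀, hℓ, hm _ (ha ℓ) i₀, rfl, ?_⟩
    refine hD.2.2 (a ℓ) (ha ℓ) _ (fun i => ?_)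
    rcases eq_or_ne i i₀ with rfl | hne
    · erw [Function.update_self]
      exact_mod_cast hℓ.le
    · erw [Function.update_of_ne hne]
  · exfalso
    push_neg at h
    have key : ∀ (c : Fin w → Fin n → ℕ+), (∀ ℓ, (c ℓ i₀ : ℕ) ≤ j₀) →
        ∑ j ∈ Finset.range (j₀ + 1), degOf c i₀ j = w := by
      intro c hc
      have := Finset.card_eq_sum_card_fiberwise
        (f := fun ℓ : Fin w => (c ℓ i₀ : ℕ)) (s := Finset.univ)
        (t := Finset.range (j₀ + 1))
        (fun ℓ _ => Finset.mem_range.2 (Nat.lt_succ_of_le (hc ℓ)))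
      simpa [degOf] using this.symm
    have hbsum : ∑ j ∈ Finset.range (j₀ + 1), degOf b i₀ j ≤ w := by
      have := Finset.card_eq_sum_card_fiberwise
        (f := fun ℓ : Fin w => (b ℓ i₀ : ℕ))
        (s := Finset.univ.filter fun ℓ => (b ℓ i₀ : ℕ) ≤ j₀)
        (t := Finset.range (j₀ + 1))
        (fun ℓ hℓ => Finset.mem_range.2 (Nat.lt_succ_of_le (Finset.mem_filter.1 hℓ).2))
      have hle : ∑ j ∈ Finset.range (j₀ + 1), degOf b i₀ j
          ≤ ∑ j ∈ Finset.range (j₀ + 1),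
            ((Finset.univ.filter fun ℓ => (b ℓ i₀ : ℕ) ≤ j₀).filter
              fun ℓ => (b ℓ i₀ : ℕ) = j).card := by
        refine Finset.sum_le_sum fun j hj => ?_
        have hj' := Nat.lt_succ_iff.1 (Finset.mem_range.1 hj)
        apply Finset.card_le_card
        intro ℓ hℓ
        simp only [degOf, Finset.mem_filter, Finset.mem_univ, true_and] at hℓ ⊢
        exact ⟨hℓ ▸ hj', hℓ⟩
      calc ∑ j ∈ Finset.range (j₀ + 1), degOf b i₀ j ≤ _ := hle
        _ = (Finset.univ.filter fun ℓ => (b ℓ i₀ : ℕ) ≤ j₀).card := this.symm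
        _ ≤ (Finset.univ : Finset (Fin w)).card := Finset.card_le_card (Finset.filter_subset _ _)
        _ = w := by simp
    have hlt' : ∑ j ∈ Finset.range (j₀ + 1), degOf a i₀ j
        < ∑ j ∈ Finset.range (j₀ + 1), degOf b i₀ j := by
      refine Finset.sum_lt_sum (fun j hj => ?_) ⟨j₀, Finset.self_mem_range_succ j₀, hlt⟩
      have hj' := Nat.lt_succ_iff.1 (Finset.mem_range.1 hj)
      rcases lt_or_eq_of_le hj' with h' | rfl
      · exact (hpre i₀ j (Or.inr ⟨rfl, h'⟩)).le
      · exact hlt.le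
    have := key a h
    omega
end

section
/- Let B = [b_{i,j}] be the p×n tableau produced by the standardization algorithm from a semi-standard tableau A: column 1 of B equals column 1 of A, and for each j the (j+1)-th column is the unique rearrangement of the multiset supp_{j+1}(A) satisfying (Cond-2) if b^i_j >_σ b^{i'}_j then b_{i,j+1} ≥ b_{i',j+1}, and (Cond-3) if b^i_j = b^{i'}_j with i < i' then b_{i,j+1} ≤ b_{i',j+1} (where b^i_j = (b_{i,1},…,b_{i,j})). Then B is a standard tableau with supp(B) = supp(A). -/
open Finset

lemma exists_min_diff {q : ℕ} {α : Type*} (a b : Fin q → α) (h : a ≠ b) :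
    ∃ t : Fin q, a t ≠ b t ∧ ∀ u, u < t → a u = b u := by
  classical
  obtain ⟨t0, ht0⟩ := Function.ne_iff.mp h
  have hS : (Finset.univ.filter fun t => a t ≠ b t).Nonempty := ⟨t0, by simp [ht0]⟩
  refine ⟨Finset.min' _ hS, ?_, ?_⟩
  · have := Finset.min'_mem _ hS
    simpa using this
  · intro u hu
    by_contra hne
    exact absurd (Finset.min'_le _ u (by simpa using hne)) (not_le.mpr hu)

lemma sigma_dich {n : ℕ} (a b : Fin n → ℕ+) (h : a ≠ b) : sigmaGT a b ∨ sigmaGT b a := by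
  obtain ⟨t, hne, hmin⟩ := exists_min_diff a b h
  rcases lt_or_gt_of_ne hne with hlt | hlt
  · exact Or.inl ⟨t, hmin, hlt⟩
  · exact Or.inr ⟨t, fun u hu => (hmin u hu).symm, hlt⟩

lemma colMono {p n : ℕ} (X : Fin p → Fin n → ℕ+) (hX : SemiStandard X) (l : Fin n)
    (i i' : Fin p) (hii : i ≤ i') (hpre : ∀ t, t < l → X i t = X i' t) : X i l ≤ X i' l := by
  rcases hX i i' hii with heq | ⟨t, hbef, hlt⟩
  · exact le_of_eq (congrFun heq l)
  · rcases lt_trichotomy t l with h | h | h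
    · exact absurd (hpre t h) (ne_of_lt hlt)
    · exact le_of_lt (h ▸ hlt)
    · exact le_of_eq (hbef l h)

def Tset {p n : ℕ} (k : Fin p) (D : Fin p → Fin n → ℕ+) (l : ℕ) : Finset (Fin p) :=
  Finset.univ.filter fun i => k ≤ i ∧ ∀ t : Fin n, (t : ℕ) < l → D i t = D k t

lemma mem_Tset {p n : ℕ} {k : Fin p} {D : Fin p → Fin n → ℕ+} {l : ℕ} {i : Fin p} :
    i ∈ Tset k D l ↔ k ≤ i ∧ ∀ t : Fin n, (t : ℕ) < l → D i t = D k t := by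
  simp [Tset]

lemma Tset_succ {p n : ℕ} {k : Fin p} {D : Fin p → Fin n → ℕ+} {l : ℕ} (hl : l < n) :
    Tset k D (l+1) = (Tset k D l).filter fun i => D i ⟨l, hl⟩ = D k ⟨l, hl⟩ := by
  ext i
  simp only [mem_Tset, Finset.mem_filter]
  constructor
  · rintro ⟨hk, hall⟩
    exact ⟨⟨hk, fun t ht => hall t (by omega)⟩, hall ⟨l, hl⟩ (Nat.lt_succ_self l)⟩
  · rintro ⟨⟨hk, hall⟩, hcol⟩
    refine ⟨hk, fun t ht => ?_⟩
    rcases Nat.lt_succ_iff_lt_or_eq.mp ht with h | h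
    · exact hall t h
    · have : t = ⟨l, hl⟩ := Fin.ext h
      rw [this]; exact hcol

lemma Tset_col_mono {p n : ℕ} {D : Fin p → Fin n → ℕ+} (hD : SemiStandard D)
    {k : Fin p} {l : ℕ} (hl : l < n) {i : Fin p} (hi : i ∈ Tset k D l) :
    D k ⟨l, hl⟩ ≤ D i ⟨l, hl⟩ := by
  obtain ⟨hk, hall⟩ := mem_Tset.mp hi
  exact colMono D hD ⟨l, hl⟩ k i hk fun t ht => (hall t ht).symm

lemma Tset_card_succ {p n : ℕ} {D : Fin p → Fin n → ℕ+} (hD : SemiStandard D)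
    {k : Fin p} {l : ℕ} (hl : l < n) :
    (Tset k D l).card
      = (Tset k D (l+1)).card
        + ((Tset k D l).filter fun i => D k ⟨l, hl⟩ < D i ⟨l, hl⟩).card := by
  classical
  rw [Tset_succ hl]
  rw [← Finset.card_filter_add_card_filter_not
    (s := Tset k D l) (p := fun i => D i ⟨l, hl⟩ = D k ⟨l, hl⟩)]
  congr 1
  apply congrArg Finset.card
  apply Finset.filter_congr
  intro i hi
  have hle := Tset_col_mono hD hl hi
  constructor
  · intro hne; exact lt_of_le_of_ne hle (fun e => hne e.symm)
  · intro hlt e; exact absurd e (ne_of_gt hlt)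

lemma countEq {p n : ℕ} {C B : Fin p → Fin n → ℕ+} (hs : suppEq C B) {k : Fin p}
    (hrows : ∀ i, i < k → B i = C i) (c : Fin n) (q : ℕ+ → Prop) [DecidablePred q] :
    (Finset.univ.filter fun i => k ≤ i ∧ q (C i c)).card
      = (Finset.univ.filter fun i => k ≤ i ∧ q (B i c)).card := by
  classical
  have hcard : ∀ f : Fin p → ℕ+, (Finset.univ.filter fun i => q (f i)).card
      = Multiset.countP q (Multiset.map f Finset.univ.val) := by
    intro f
    rw [Multiset.countP_map]
    simp [Finset.card_filter, Multiset.countP_eq_card_filter, Finset.filter]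
  have hfull : (Finset.univ.filter fun i => q (C i c)).card
      = (Finset.univ.filter fun i => q (B i c)).card := by
    rw [hcard (fun i => C i c), hcard (fun i => B i c)]
    exact congrArg (Multiset.countP q) (hs c)
  have hsplit : ∀ f : Fin p → ℕ+,
      (Finset.univ.filter fun i => q (f i)).card
        = (Finset.univ.filter fun i => k ≤ i ∧ q (f i)).card
          + (Finset.univ.filter fun i => ¬ k ≤ i ∧ q (f i)).card := by
    intro f
    rw [← Finset.card_filter_add_card_filter_not
      (s := (Finset.univ : Finset (Fin p)).filter fun i => q (f i)) (p := fun i => k ≤ i)]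
    rw [Finset.filter_filter, Finset.filter_filter]
    congr 1 <;> · congr 1; ext i; simp only [Finset.mem_filter, Finset.mem_univ, true_and]; tauto
  have hlow : (Finset.univ.filter fun i => ¬ k ≤ i ∧ q (C i c))
      = (Finset.univ.filter fun i => ¬ k ≤ i ∧ q (B i c)) := by
    apply Finset.filter_congr
    intro i _
    constructor <;> rintro ⟨h, hq⟩ <;> refine ⟨h, ?_⟩ <;>
      rw [hrows i (not_le.mp h)] at * <;> exact hq
  have h1 := hsplit (fun i => C i c)
  have h2 := hsplit (fun i => B i c)
  have h3 := congrArg Finset.card hlow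
  omega

lemma outTB {p n : ℕ} {B : Fin p → Fin n → ℕ+} (hSB : SemiStandard B)
    (hcond2 : ∀ (i i' : Fin p) (j : ℕ) (hj : j + 1 < n),
      (∃ k : Fin n, (k : ℕ) ≤ j ∧ (∀ l : Fin n, l < k → B i l = B i' l) ∧
        B i k < B i' k) → B i' ⟨j + 1, hj⟩ ≤ B i ⟨j + 1, hj⟩)
    {k i : Fin p} (hk : k ≤ i) {l : ℕ} (hl : l < n)
    (hout : i ∉ Tset k B l) : B i ⟨l, hl⟩ ≤ B k ⟨l, hl⟩ := by
  have hex : ∃ t : Fin n, (t : ℕ) < l ∧ B i t ≠ B k t := by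
    by_contra h
    push_neg at h
    exact hout (mem_Tset.mpr ⟨hk, h⟩)
  obtain ⟨t, htl, htne⟩ := hex
  rcases hSB k i hk with heq | ⟨u, hu, huv⟩
  · exact absurd (congrFun heq t).symm htne
  · have hul : (u : ℕ) < l := by
      by_contra h
      exact htne (hu t (by rw [Fin.lt_def]; omega)).symm
    have hj : (l - 1) + 1 < n := by omega
    have hres := hcond2 k i (l - 1) hj ⟨u, by omega, hu, huv⟩
    have he : (⟨l - 1 + 1, hj⟩ : Fin n) = ⟨l, hl⟩ := Fin.ext (by show l - 1 + 1 = l; omega)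
    rwa [he] at hres

theorem stmt15 {p n : ℕ} (A B : Fin p → Fin n → ℕ+)
    (hA : SemiStandard A)
    (hsupp : suppEq B A)
    (hcol1 : ∀ (h : 0 < n) (i : Fin p), B i ⟨0, h⟩ = A i ⟨0, h⟩)
    (hcond2 : ∀ (i i' : Fin p) (j : ℕ) (hj : j + 1 < n),
      (∃ k : Fin n, (k : ℕ) ≤ j ∧ (∀ l : Fin n, l < k → B i l = B i' l) ∧
        B i k < B i' k) →
      B i' ⟨j + 1, hj⟩ ≤ B i ⟨j + 1, hj⟩)
    (hcond3 : ∀ (i i' : Fin p) (j : ℕ) (hj : j + 1 < n),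
      (∀ l : Fin n, (l : ℕ) ≤ j → B i l = B i' l) → i < i' →
      B i ⟨j + 1, hj⟩ ≤ B i' ⟨j + 1, hj⟩) :
    IsStandard B ∧ suppEq B A := by
  classical
  have hSB : SemiStandard B := by
    intro i i' hii
    by_cases heq : B i = B i'
    · exact Or.inl heq
    · right
      obtain ⟨t, htne, htmin⟩ := exists_min_diff (B i) (B i') heq
      refine ⟨t, htmin, ?_⟩
      have hii' : i < i' := lt_of_le_of_ne hii (by rintro rfl; exact heq rfl)
      rcases Nat.eq_zero_or_pos (t : ℕ) with h0 | hpos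
      · have hn : 0 < n := by have := t.isLt; omega
        have ht0 : t = ⟨0, hn⟩ := Fin.ext h0
        have hmono := colMono A hA ⟨0, hn⟩ i i' hii
          (fun u hu => absurd hu (by rw [Fin.lt_def]; omega))
        rw [ht0] at htne ⊢
        rw [hcol1 hn i, hcol1 hn i'] at htne ⊢
        exact lt_of_le_of_ne hmono htne
      · obtain ⟨j, hj⟩ : ∃ j, (t : ℕ) = j + 1 := ⟨(t : ℕ) - 1, by omega⟩
        have hjn : j + 1 < n := hj ▸ t.isLt
        have htj : t = ⟨j + 1, hjn⟩ := Fin.ext hj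
        have hres := hcond3 i i' j hjn
          (fun l' hl' => htmin l' (by rw [Fin.lt_def]; omega)) hii'
        rw [htj] at htne ⊢
        exact lt_of_le_of_ne hres htne
  refine ⟨⟨hSB, ?_⟩, hsupp⟩
  intro C hC hsC hne
  obtain ⟨k, hkne, hkmin⟩ := exists_min_diff C B hne
  rcases sigma_dich (C k) (B k) hkne with hrow | hrow
  · exact ⟨k, hkmin, hrow⟩
  · exfalso
    obtain ⟨m, hcols, hmlt⟩ := hrow
    have hrows : ∀ i, i < k → B i = C i := fun i h => (hkmin i h).symm
    -- main induction on columns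
    have key : ∀ l : ℕ, l ≤ (m : ℕ) → (Tset k B l).card ≤ (Tset k C l).card := by
      intro l
      induction l with
      | zero =>
        intro _
        have hTeq : Tset k B 0 = Tset k C 0 := by
          ext i; simp [mem_Tset]
        rw [hTeq]
      | succ l ih =>
        intro hlm
        have hl : l < n := by have := m.isLt; omega
        have hIH := ih (by omega)
        have hBy : B k ⟨l, hl⟩ = C k ⟨l, hl⟩ := hcols ⟨l, hl⟩ (by rw [Fin.lt_def]; show l < (m : ℕ); omega)
        have hB := Tset_card_succ (D := B) hSB (k := k) hl
        have hC' := Tset_card_succ (D := C) hC (k := k) hl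
        have hCsub : ((Tset k C l).filter fun i => C k ⟨l, hl⟩ < C i ⟨l, hl⟩).card
            ≤ (Finset.univ.filter fun i => k ≤ i ∧ C k ⟨l, hl⟩ < C i ⟨l, hl⟩).card := by
          apply Finset.card_le_card
          intro i hi
          simp only [Finset.mem_filter, Finset.mem_univ, true_and] at hi ⊢
          exact ⟨(mem_Tset.mp hi.1).1, hi.2⟩
        have hcnt := countEq hsC hrows ⟨l, hl⟩ (fun v => C k ⟨l, hl⟩ < v)
        beta_reduce at hcnt
        have hBset : (Finset.univ.filter fun i => k ≤ i ∧ C k ⟨l, hl⟩ < B i ⟨l, hl⟩)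
            = (Tset k B l).filter fun i => B k ⟨l, hl⟩ < B i ⟨l, hl⟩ := by
          ext i
          simp only [Finset.mem_filter, Finset.mem_univ, true_and]
          rw [← hBy]
          constructor
          · rintro ⟨hki, hlt⟩
            have hin : i ∈ Tset k B l := by
              by_contra hout
              exact absurd (outTB hSB hcond2 hki hl hout) (not_le.mpr hlt)
            exact ⟨hin, hlt⟩
          · rintro ⟨hin, hlt⟩
            exact ⟨(mem_Tset.mp hin).1, hlt⟩
        have hBc := congrArg Finset.card hBset
        omega
    have hmn : (m : ℕ) < n := m.isLt
    have hfin := key (m : ℕ) le_rfl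
    have hme : (⟨(m : ℕ), hmn⟩ : Fin n) = m := Fin.eta m hmn
    have hkB : k ∈ Tset k B (m : ℕ) := mem_Tset.mpr ⟨le_refl k, fun t _ => rfl⟩
    have hA1 : (Tset k C (m : ℕ)).card
        ≤ (Finset.univ.filter fun i => k ≤ i ∧ C k m ≤ C i m).card := by
      apply Finset.card_le_card
      intro i hi
      have hmono := Tset_col_mono hC hmn hi
      rw [hme] at hmono
      simp only [Finset.mem_filter, Finset.mem_univ, true_and]
      exact ⟨(mem_Tset.mp hi).1, hmono⟩
    have hA2 := countEq hsC hrows m (fun v => C k m ≤ v)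
    beta_reduce at hA2
    have hA3 : (Finset.univ.filter fun i => k ≤ i ∧ C k m ≤ B i m)
        ⊆ (Tset k B (m : ℕ)).erase k := by
      intro i hi
      simp only [Finset.mem_filter, Finset.mem_univ, true_and] at hi
      obtain ⟨hki, hxi⟩ := hi
      have hgt : B k m < B i m := lt_of_lt_of_le hmlt hxi
      have hin : i ∈ Tset k B (m : ℕ) := by
        by_contra hout
        have := outTB hSB hcond2 hki hmn hout
        rw [hme] at this
        exact absurd this (not_le.mpr hgt)
      refine Finset.mem_erase.mpr ⟨?_, hin⟩
      rintro rfl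
      exact lt_irrefl _ hgt
    have hA3c := Finset.card_le_card hA3
    have herase := Finset.card_erase_of_mem hkB
    have hkcard : 1 ≤ (Tset k B (m : ℕ)).card := Finset.card_pos.mpr ⟨k, hkB⟩
    omega
end

section
/- Let [p; q] be a standard 2×n tableau and let [a; b] be a semi-standard 2×n tableau with supp([a;b]) = supp([p;q]) and [a;b] ≠ [p;q]. If k is the first index with a_k ≠ b_k (so a_k < b_k), then p_i = q_i = a_i = b_i for i < k, p_k = a_k, q_k = b_k, and for all j > k: p_j = max{a_j, b_j} and q_j = min{a_j, b_j}. -/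
open Finset

private lemma mapfin2 {α : Type*} (f : Fin 2 → α) :
    Multiset.map f Finset.univ.val = {f 0, f 1} := rfl

private lemma pairEq {α : Type*} [DecidableEq α] {x y z w : α}
    (h : ({x, y} : Multiset α) = {z, w}) : (x = z ∧ y = w) ∨ (x = w ∧ y = z) := by
  have hx : x ∈ ({z, w} : Multiset α) := h ▸ by simp
  simp at hx
  rcases hx with rfl | rfl
  · left; refine ⟨rfl, ?_⟩
    have := (Multiset.cons_inj_right x).mp h
    simpa using this
  · right; refine ⟨rfl, ?_⟩
    rw [Multiset.pair_comm z x] at h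
    have := (Multiset.cons_inj_right x).mp h
    simpa using this

theorem stmt16 {n : ℕ} (a b p q : Fin n → ℕ+)
    (hstd : IsStandard ![p, q]) (hss : SemiStandard ![a, b])
    (hsupp : suppEq ![a, b] ![p, q]) (hne : ![a, b] ≠ ![p, q])
    (k : Fin n) (hk : a k ≠ b k) (hmin : ∀ i : Fin n, i < k → a i = b i) :
    a k < b k ∧ (∀ i : Fin n, i < k → p i = a i ∧ q i = b i) ∧
    p k = a k ∧ q k = b k ∧
    ∀ j : Fin n, k < j → p j = max (a j) (b j) ∧ q j = min (a j) (b j) := by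
  have hcol : ∀ j : Fin n, (a j = p j ∧ b j = q j) ∨ (a j = q j ∧ b j = p j) := by
    intro j
    have h := hsupp j
    rw [mapfin2, mapfin2] at h
    simp only [Matrix.cons_val_zero, Matrix.cons_val_one, Matrix.head_cons] at h
    exact pairEq h
  have hab : sigmaGE a b := by
    have := hss 0 1 (by decide)
    simpa using this
  have hkab : a k < b k := by
    rcases hab with heq | ⟨m, hpre, hlt⟩
    · exact absurd (congrFun heq k) hk
    · rcases lt_trichotomy m k with h | rfl | h
      · exact absurd (hmin m h) (ne_of_lt hlt)
      · exact hlt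
      · exact absurd (hpre k h) hk
  have hpref : ∀ i : Fin n, i < k → p i = a i ∧ q i = b i := by
    intro i hi
    have habi := hmin i hi
    rcases hcol i with ⟨h1, h2⟩ | ⟨h1, h2⟩
    · exact ⟨h1.symm, h2.symm⟩
    · exact ⟨h2.symm.trans habi.symm, h1.symm.trans habi⟩
  have hpq : sigmaGE p q := by
    have := hstd.1 0 1 (by decide)
    simpa using this
  have hpkne : p k ≠ q k := by
    rcases hcol k with ⟨h1, h2⟩ | ⟨h1, h2⟩
    · rw [← h1, ← h2]; exact hk
    · rw [← h1, ← h2]; exact hk.symm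
  have hpqk : p k < q k := by
    rcases hpq with heq | ⟨m, hpre, hlt⟩
    · exact absurd (congrFun heq k) hpkne
    · rcases lt_trichotomy m k with h | rfl | h
      · exact absurd (((hpref m h).1.trans (hmin m h)).trans (hpref m h).2.symm)
          (ne_of_lt hlt)
      · exact hlt
      · exact absurd (hpre k h) hpkne
  have hpk : p k = a k ∧ q k = b k := by
    rcases hcol k with ⟨h1, h2⟩ | ⟨h1, h2⟩
    · exact ⟨h1.symm, h2.symm⟩
    · exfalso
      rw [← h1, ← h2] at hpqk
      exact absurd hpqk (not_lt.mpr (le_of_lt hkab))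
  have hpeqq : ∀ i : Fin n, i < k → p i = q i := fun i hi =>
    ((hpref i hi).1.trans (hmin i hi)).trans (hpref i hi).2.symm
  have hkey : ∀ j : Fin n, k < j → q j ≤ p j := by
    intro j hj
    by_contra hlt
    push_neg at hlt
    set B : Fin 2 → Fin n → ℕ+ :=
      ![Function.update p j (q j), Function.update q j (p j)] with hB
    have hB0 : B 0 = Function.update p j (q j) := rfl
    have hB1 : B 1 = Function.update q j (p j) := rfl
    have hBss : SemiStandard B := by
      intro i i' hii'
      fin_cases i <;> fin_cases i'
      · exact Or.inl rfl
      · right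
        refine ⟨k, ?_, ?_⟩
        · intro m hm
          have hmj : m ≠ j := ne_of_lt (hm.trans hj)
          show B 0 m = B 1 m
          rw [hB0, hB1, Function.update_of_ne hmj, Function.update_of_ne hmj]
          exact hpeqq m hm
        · have hkj : k ≠ j := ne_of_lt hj
          show B 0 k < B 1 k
          rw [hB0, hB1, Function.update_of_ne hkj, Function.update_of_ne hkj]
          exact hpqk
      · exact absurd hii' (by decide)
      · exact Or.inl rfl
    have hBsupp : suppEq B ![p, q] := by
      intro m
      rw [mapfin2, mapfin2]
      simp only [Matrix.cons_val_zero, Matrix.cons_val_one, Matrix.head_cons]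
      by_cases hmj : m = j
      · subst hmj
        rw [hB0, hB1, Function.update_self, Function.update_self]
        exact Multiset.pair_comm _ _
      · rw [hB0, hB1, Function.update_of_ne hmj, Function.update_of_ne hmj]
    have hBne : B ≠ ![p, q] := by
      intro h
      have h' := congrFun (congrFun h 0) j
      rw [hB0, Function.update_self] at h'
      simp only [Matrix.cons_val_zero] at h'
      exact absurd h' (ne_of_gt hlt)
    obtain ⟨r, hrpre, hrGT⟩ := hstd.2 B hBss hBsupp hBne
    fin_cases r
    · obtain ⟨m, hmpre, hmlt⟩ := hrGT
      by_cases hmj : m = j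
      · subst hmj
        have : B 0 m < p m := by simpa using hmlt
        rw [hB0, Function.update_self] at this
        exact absurd this (not_lt.mpr (le_of_lt hlt))
      · have : B 0 m < p m := by simpa using hmlt
        rw [hB0, Function.update_of_ne hmj] at this
        exact lt_irrefl _ this
    · have h0 : B 0 = p := by
        have := hrpre 0 (by decide)
        simpa using this
      have h' := congrFun h0 j
      rw [hB0, Function.update_self] at h'
      exact absurd h' (ne_of_gt hlt)
  refine ⟨hkab, hpref, hpk.1, hpk.2, ?_⟩
  intro j hj
  have hq := hkey j hj
  rcases hcol j with ⟨h1, h2⟩ | ⟨h1, h2⟩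
  · rw [← h1, ← h2] at hq
    exact ⟨h1.symm.trans (max_eq_left hq).symm, h2.symm.trans (min_eq_right hq).symm⟩
  · rw [← h1, ← h2] at hq
    exact ⟨h2.symm.trans (max_eq_right hq).symm, h1.symm.trans (min_eq_left hq).symm⟩
end
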